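/- arXiv:2210.04364 — 3 statements merged into one kernel-verified Lean document; each statement's English description precedes it below -/
import Mathlib

section
/- Let φ : [0,1] → ℝ be a Lipschitz function with φ(0) = 0. Suppose there exist p ≥ 1 and a non-negative function λ ∈ L^p(0,1) such that |φ'(x)| ≤ λ(x)·|φ(x)|·x^((1-p)/p) for almost every x ∈ (0,1). Then φ ≡ 0 on [0,1]. -/
open MeasureTheory Set ENNReal

lemma lip_integral_deriv_le {ψ : ℝ → ℝ} {K : NNReal} (h : LipschitzWith K ψ) {a b : ℝ}
    (hab : a ≤ b) : ∫ x in Ioc a b, deriv ψ x ≤ ψ b - ψ a := by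
  set C : ℝ := (K : ℝ) + 1 with hC_def
  have hK : (0:ℝ) ≤ K := K.coe_nonneg
  set f : ℝ → ℝ := fun x => ψ x + C * x with hf_def
  have hlip : ∀ x y : ℝ, |ψ x - ψ y| ≤ K * |x - y| := by
    intro x y
    have := h.dist_le_mul x y
    simpa [Real.dist_eq] using this
  have hmono : Monotone f := by
    intro x y hxy
    have h1 := hlip x y
    have h2 : ψ x - ψ y ≤ K * (y - x) := by
      rcases abs_le.1 h1 with ⟨h1a, h1b⟩
      have : |x - y| = y - x := by rw [abs_sub_comm]; exact abs_of_nonneg (by linarith)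
      rw [this] at h1b; linarith
    simp only [hf_def]
    nlinarith
  have hcont : Continuous f := h.continuous.add (continuous_const.mul continuous_id)
  have hstieq : ∀ x, hmono.stieltjesFunction x = f x := by
    intro x
    rw [hmono.stieltjesFunction_eq]
    exact rightLim_eq_of_tendsto
      ((hcont.tendsto x).mono_left nhdsWithin_le_nhds)
  set μ := hmono.stieltjesFunction.measure with hμ_def
  have hμIoc : μ (Ioc a b) = ENNReal.ofReal (f b - f a) := by
    rw [StieltjesFunction.measure_Ioc, hstieq, hstieq]
  have hae := hmono.ae_hasDerivAt
  have hlint_le : ∫⁻ x in Ioc a b, μ.rnDeriv volume x ≤ μ (Ioc a b) :=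
    Measure.setLIntegral_rnDeriv_le _
  have hlint_ne : ∫⁻ x in Ioc a b, μ.rnDeriv volume x ≠ ⊤ :=
    (lt_of_le_of_lt hlint_le (by rw [hμIoc]; exact ENNReal.ofReal_lt_top)).ne
  have hint : Integrable (fun x => (μ.rnDeriv volume x).toReal) (volume.restrict (Ioc a b)) :=
    integrable_toReal_of_lintegral_ne_top (Measure.measurable_rnDeriv _ _).aemeasurable hlint_ne
  have h2 : ∀ᵐ x ∂volume, deriv ψ x = (μ.rnDeriv volume x).toReal - C := by
    filter_upwards [hae] with x hx
    have hψd : HasDerivAt ψ ((μ.rnDeriv volume x).toReal - C) x := by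
      have := hx.sub ((hasDerivAt_id x).const_mul C)
      simp only [mul_one] at this
      have hfun : (f - fun y => C * id y) = ψ := by funext y; simp [hf_def]
      rwa [hfun] at this
    exact hψd.deriv
  have hcongr : ∫ x in Ioc a b, deriv ψ x
      = ∫ x in Ioc a b, ((μ.rnDeriv volume x).toReal - C) :=
    integral_congr_ae (ae_restrict_of_ae h2)
  rw [hcongr, integral_sub hint (integrable_const _), integral_const]
  have hIoc : (volume.restrict (Ioc a b)) univ = ENNReal.ofReal (b - a) := by
    simp [Real.volume_Ioc]
  have hlc : ∫ x in Ioc a b, (μ.rnDeriv volume x).toReal ≤ f b - f a := by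
    rw [integral_toReal (Measure.measurable_rnDeriv _ _).aemeasurable
      (ae_restrict_of_ae (Measure.rnDeriv_lt_top _ _))]
    calc (∫⁻ x in Ioc a b, μ.rnDeriv volume x).toReal
        ≤ (μ (Ioc a b)).toReal := ENNReal.toReal_mono (by rw [hμIoc]; exact ENNReal.ofReal_ne_top) hlint_le
      _ = f b - f a := by rw [hμIoc]; exact ENNReal.toReal_ofReal (by linarith [hmono hab])
  have hmeas : (volume.restrict (Ioc a b)) univ = ENNReal.ofReal (b - a) := hIoc
  rw [measureReal_restrict_apply_univ, measureReal_def, Real.volume_Ioc, smul_eq_mul, ENNReal.toReal_ofReal (by linarith)]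
  have : f b - f a = ψ b - ψ a + C * (b - a) := by simp [hf_def]; ring
  linarith

lemma lip_integral_deriv_eq {ψ : ℝ → ℝ} {K : NNReal} (h : LipschitzWith K ψ) {a b : ℝ}
    (hab : a ≤ b) : ψ b - ψ a = ∫ x in Ioc a b, deriv ψ x := by
  have h1 := lip_integral_deriv_le h hab
  have hneg : LipschitzWith K (fun x => -ψ x) := h.neg
  have h2 := lip_integral_deriv_le hneg hab
  have hder : ∀ x, deriv (fun y => -ψ y) x = -deriv ψ x := by
    intro x; exact deriv.neg
  rw [integral_congr_ae (ae_of_all _ fun x => hder x)] at h2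
  rw [integral_neg] at h2
  linarith

lemma lip_abs_deriv_le {ψ : ℝ → ℝ} {K : NNReal} (h : LipschitzWith K ψ) (x : ℝ) :
    |deriv ψ x| ≤ K := by
  have h1 : ‖fderiv ℝ ψ x‖ ≤ K := norm_fderiv_le_of_lipschitz ℝ h
  calc |deriv ψ x| = ‖(fderiv ℝ ψ x) 1‖ := by rw [← fderiv_apply_one_eq_deriv]; simp [Real.norm_eq_abs]
    _ ≤ ‖fderiv ℝ ψ x‖ * ‖(1:ℝ)‖ := (fderiv ℝ ψ x).le_opNorm 1
    _ ≤ K := by simpa using h1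

lemma lip_ofReal_abs_sub_le {ψ : ℝ → ℝ} {K : NNReal} (h : LipschitzWith K ψ) {a b : ℝ}
    (hab : a ≤ b) :
    ENNReal.ofReal |ψ b - ψ a| ≤ ∫⁻ t in Ioo a b, ENNReal.ofReal |deriv ψ t| := by
  have hIoo : ∫⁻ t in Ioo a b, ENNReal.ofReal |deriv ψ t|
      = ∫⁻ t in Ioc a b, ENNReal.ofReal |deriv ψ t| := by
    rw [Measure.restrict_congr_set Ioo_ae_eq_Ioc]
  rw [hIoo]
  set I := ∫⁻ t in Ioc a b, ENNReal.ofReal |deriv ψ t| with hI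
  rcases eq_or_ne I ⊤ with hItop | hItop
  · rw [hItop]; exact le_top
  have heq := lip_integral_deriv_eq h hab
  have habs : |ψ b - ψ a| ≤ ∫ t in Ioc a b, |deriv ψ t| := by
    rw [heq]
    simpa [Real.norm_eq_abs] using
      norm_integral_le_integral_norm (μ := volume.restrict (Ioc a b)) (deriv ψ)
  have hlint : ∫ t in Ioc a b, |deriv ψ t| = I.toReal := by
    rw [hI, integral_eq_lintegral_of_nonneg_ae (ae_of_all _ fun t => abs_nonneg _)
      ((measurable_deriv ψ).abs.aestronglyMeasurable)]
  rw [hlint] at habs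
  calc ENNReal.ofReal |ψ b - ψ a| ≤ ENNReal.ofReal I.toReal := ENNReal.ofReal_le_ofReal habs
    _ = I := ENNReal.ofReal_toReal hItop


lemma iterate_vanish {ψ : ℝ → ℝ} {K : NNReal} (h : LipschitzWith K ψ)
    {L : ℝ → ℝ≥0∞} {p : ℝ}
    (hL : ∀ᵐ x ∂(volume.restrict (Ioo (0:ℝ) 1)),
      ENNReal.ofReal |deriv ψ x| ≤ L x * ENNReal.ofReal (|ψ x| * x ^ ((1 - p) / p)))
    {a b : ℝ} (ha : 0 ≤ a) (hab : a < b) (hb : b ≤ 1) (hψa : ψ a = 0)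
    {c : ℝ≥0∞} (hc : c < 1)
    (hG : ∀ x ∈ Ioc a b,
      (∫⁻ t in Ioo a x, L t * ENNReal.ofReal ((t - a) * t ^ ((1 - p) / p)))
        ≤ c * ENNReal.ofReal (x - a)) :
    ∀ x ∈ Icc a b, ψ x = 0 := by
  have key : ∀ n : ℕ, ∀ x ∈ Icc a b,
      ENNReal.ofReal |ψ x| ≤ (K : ℝ≥0∞) * c ^ n * ENNReal.ofReal (x - a) := by
    intro n
    induction n with
    | zero =>
      intro x hx
      have h1 : |ψ x| ≤ K * (x - a) := by
        have := h.dist_le_mul x a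
        rw [Real.dist_eq, Real.dist_eq, hψa, sub_zero] at this
        calc |ψ x| ≤ K * |x - a| := this
          _ = K * (x - a) := by rw [abs_of_nonneg (by linarith [hx.1])]
      calc ENNReal.ofReal |ψ x| ≤ ENNReal.ofReal ((K:ℝ) * (x - a)) :=
            ENNReal.ofReal_le_ofReal h1
        _ = (K : ℝ≥0∞) * ENNReal.ofReal (x - a) := by
            rw [ENNReal.ofReal_mul K.coe_nonneg, ENNReal.ofReal_coe_nnreal]
        _ = (K : ℝ≥0∞) * c ^ 0 * ENNReal.ofReal (x - a) := by rw [pow_zero, mul_one]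
    | succ n ih =>
      intro x hx
      rcases eq_or_lt_of_le hx.1 with rfl | hax
      · simp [hψa]
      have hsub : Ioo a x ⊆ Ioo (0:ℝ) 1 := fun t ht =>
        ⟨lt_of_le_of_lt ha ht.1, lt_of_lt_of_le ht.2 (le_trans hx.2 hb)⟩
      have hL' : ∀ᵐ t ∂(volume.restrict (Ioo a x)),
          ENNReal.ofReal |deriv ψ t| ≤ L t * ENNReal.ofReal (|ψ t| * t ^ ((1 - p) / p)) :=
        ae_restrict_of_ae_restrict_of_subset hsub hL
      have step1 : ENNReal.ofReal |ψ x| ≤ ∫⁻ t in Ioo a x, ENNReal.ofReal |deriv ψ t| := by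
        have := lip_ofReal_abs_sub_le h hax.le
        simpa [hψa] using this
      have step2 : (∫⁻ t in Ioo a x, ENNReal.ofReal |deriv ψ t|)
          ≤ ∫⁻ t in Ioo a x, L t * ENNReal.ofReal (|ψ t| * t ^ ((1 - p) / p)) :=
        lintegral_mono_ae hL'
      have step3 : (∫⁻ t in Ioo a x, L t * ENNReal.ofReal (|ψ t| * t ^ ((1 - p) / p)))
          ≤ ∫⁻ t in Ioo a x, ((K : ℝ≥0∞) * c ^ n) *
              (L t * ENNReal.ofReal ((t - a) * t ^ ((1 - p) / p))) := by
        apply lintegral_mono_ae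
        apply ae_restrict_of_ae_restrict_of_subset (subset_refl _)
        rw [ae_restrict_iff' measurableSet_Ioo]
        apply ae_of_all
        intro t ht
        have htmem : t ∈ Icc a b := ⟨ht.1.le, le_trans ht.2.le hx.2⟩
        have hta : (0:ℝ) ≤ t - a := by linarith [ht.1]
        have htpow : (0:ℝ) ≤ t ^ ((1 - p) / p) :=
          Real.rpow_nonneg (le_trans ha ht.1.le) _
        have ihx := ih t htmem
        calc L t * ENNReal.ofReal (|ψ t| * t ^ ((1 - p) / p))
            = L t * (ENNReal.ofReal |ψ t| * ENNReal.ofReal (t ^ ((1 - p) / p))) := by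
              rw [ENNReal.ofReal_mul (abs_nonneg _)]
          _ ≤ L t * (((K : ℝ≥0∞) * c ^ n * ENNReal.ofReal (t - a)) *
                ENNReal.ofReal (t ^ ((1 - p) / p))) := by
              gcongr
          _ = ((K : ℝ≥0∞) * c ^ n) *
                (L t * ENNReal.ofReal ((t - a) * t ^ ((1 - p) / p))) := by
              rw [ENNReal.ofReal_mul hta]; ring
      have step4 : (∫⁻ t in Ioo a x, ((K : ℝ≥0∞) * c ^ n) *
              (L t * ENNReal.ofReal ((t - a) * t ^ ((1 - p) / p))))
          ≤ ((K : ℝ≥0∞) * c ^ n) * (c * ENNReal.ofReal (x - a)) := by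
        rw [lintegral_const_mul' _ _ (by
          exact ENNReal.mul_ne_top ENNReal.coe_ne_top (pow_ne_top hc.ne_top))]
        exact mul_le_mul_right (hG x ⟨hax, hx.2⟩) _
      calc ENNReal.ofReal |ψ x| ≤ ((K : ℝ≥0∞) * c ^ n) * (c * ENNReal.ofReal (x - a)) :=
            le_trans step1 (le_trans step2 (le_trans step3 step4))
        _ = (K : ℝ≥0∞) * c ^ (n + 1) * ENNReal.ofReal (x - a) := by ring
  intro x hx
  have htend : Filter.Tendsto (fun n : ℕ => (K : ℝ≥0∞) * c ^ n * ENNReal.ofReal (x - a))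
      Filter.atTop (nhds 0) := by
    have h1 : Filter.Tendsto (fun n : ℕ => c ^ n) Filter.atTop (nhds 0) :=
      ENNReal.tendsto_pow_atTop_nhds_zero_of_lt_one hc
    have h2 : Filter.Tendsto (fun n : ℕ => (K : ℝ≥0∞) * c ^ n) Filter.atTop
        (nhds ((K : ℝ≥0∞) * 0)) :=
      ENNReal.Tendsto.const_mul h1 (Or.inr ENNReal.coe_ne_top)
    have h3 : Filter.Tendsto (fun n : ℕ => (K : ℝ≥0∞) * c ^ n * ENNReal.ofReal (x - a))
        Filter.atTop (nhds ((K : ℝ≥0∞) * 0 * ENNReal.ofReal (x - a))) :=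
      ENNReal.Tendsto.mul_const h2 (Or.inr ENNReal.ofReal_ne_top)
    simpa using h3
  have hle : ENNReal.ofReal |ψ x| ≤ 0 :=
    ge_of_tendsto htend (Filter.Eventually.of_forall fun n => key n x hx)
  have : |ψ x| ≤ 0 := by
    simpa [ENNReal.ofReal_eq_zero] using le_antisymm hle zero_le
  exact abs_nonpos_iff.1 this

lemma small_tail {L : ℝ → ℝ≥0∞} {a : ℝ} (ha : a < 1)
    (hfin : ∫⁻ t in Ioo a 1, L t ≠ ⊤) {ε : ℝ≥0∞} (hε : 0 < ε) :
    ∃ b, a < b ∧ b ≤ 1 ∧ ∫⁻ t in Ioo a b, L t < ε := by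
  set ν : Measure ℝ := (volume.restrict (Ioo a 1)).withDensity L with hν
  set s : ℕ → Set ℝ := fun n => Ioo a (a + (1 - a) / (n + 1)) with hs_def
  have hsub : ∀ n, s n ⊆ Ioo a 1 := by
    intro n x hx
    refine ⟨hx.1, lt_of_lt_of_le hx.2 ?_⟩
    have h1 : (1 - a) / ((n:ℝ) + 1) ≤ 1 - a := by
      have hn0 : (0:ℝ) ≤ n := Nat.cast_nonneg n
      apply div_le_self (by linarith) (by linarith)
    linarith
  have hνs : ∀ n, ν (s n) = ∫⁻ t in s n, L t := by
    intro n
    rw [hν, withDensity_apply _ measurableSet_Ioo, Measure.restrict_restrict measurableSet_Ioo,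
      inter_eq_self_of_subset_left (hsub n)]
  have hiInter : ⋂ n, s n = ∅ := by
    ext x
    simp only [mem_iInter, mem_empty_iff_false, iff_false, not_forall]
    by_cases hax : a < x
    · obtain ⟨n, hn⟩ := exists_nat_gt ((1 - a) / (x - a))
      refine ⟨n, ?_⟩
      intro hmem
      have h2 := hmem.2
      have hxa : 0 < x - a := by linarith
      have h3 : (1 - a) / ((n:ℝ) + 1) < x - a := by
        rw [div_lt_iff₀ (by positivity)]
        rw [div_lt_iff₀ hxa] at hn
        nlinarith
      linarith
    · exact ⟨0, fun hmem => hax hmem.1⟩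
  have htend : Filter.Tendsto (ν ∘ s) Filter.atTop (nhds (ν (⋂ n, s n))) := by
    apply tendsto_measure_iInter_atTop
      (fun n => measurableSet_Ioo.nullMeasurableSet)
      (fun m n hmn => Ioo_subset_Ioo le_rfl (by
        have : ((m:ℝ) + 1) ≤ (n:ℝ) + 1 := by exact_mod_cast by omega
        gcongr))
    refine ⟨0, ?_⟩
    rw [hνs]
    exact fun htop => hfin (top_unique (htop ▸ lintegral_mono_set (hsub 0)))
  rw [hiInter, measure_empty] at htend
  have hev : ∀ᶠ n in Filter.atTop, ν (s n) < ε :=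
    htend.eventually_lt_const hε |>.mono (fun n hn => hn)
  obtain ⟨n, hn⟩ := hev.exists
  refine ⟨a + (1 - a) / (n + 1), ?_, ?_, ?_⟩
  · have h0 : 0 < (1 - a) / ((n:ℝ) + 1) := div_pos (by linarith) (by positivity)
    linarith
  · have hn0 : (0:ℝ) ≤ n := Nat.cast_nonneg n
    have h1 : (1 - a) / ((n:ℝ) + 1) ≤ 1 - a := div_le_self (by linarith) (by linarith)
    linarith
  · have := hn
    rwa [hνs n] at this

lemma good_start {L : ℝ → ℝ≥0∞} (hLm : AEMeasurable L (volume.restrict (Ioo (0:ℝ) 1)))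
    {p : ℝ} (hp : 1 ≤ p)
    (hL1 : ∫⁻ t in Ioo (0:ℝ) 1, L t ≠ ⊤)
    (hLp : ∫⁻ t in Ioo (0:ℝ) 1, L t ^ p ≠ ⊤)
    {a : ℝ} (ha : 0 ≤ a) (ha1 : a < 1) :
    ∃ b, a < b ∧ b ≤ 1 ∧ ∃ c : ℝ≥0∞, c < 1 ∧ ∀ x ∈ Ioc a b,
      (∫⁻ t in Ioo a x, L t * ENNReal.ofReal ((t - a) * t ^ ((1 - p) / p)))
        ≤ c * ENNReal.ofReal (x - a) := by
  by_cases hcase : p = 1 ∨ 0 < a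
  · -- bounded-weight case
    obtain ⟨w, hw_top, hw_bound⟩ : ∃ w : ℝ≥0∞, w ≠ ⊤ ∧
        ∀ t ∈ Ioo a 1, ENNReal.ofReal (t ^ ((1 - p) / p)) ≤ w := by
      rcases hcase with hp1 | hapos
      · exact ⟨1, ENNReal.one_ne_top, fun t ht => by simp [hp1]⟩
      · refine ⟨ENNReal.ofReal (a ^ ((1 - p) / p)), ENNReal.ofReal_ne_top, fun t ht => ?_⟩
        apply ENNReal.ofReal_le_ofReal
        exact Real.rpow_le_rpow_of_nonpos hapos ht.1.le
          (div_nonpos_of_nonpos_of_nonneg (by linarith) (by linarith))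
    have hfin : ∫⁻ t in Ioo a 1, L t ≠ ⊤ :=
      fun htop => hL1 (top_unique (htop ▸ lintegral_mono_set (Ioo_subset_Ioo ha le_rfl)))
    have hε : (0:ℝ≥0∞) < (w + 1)⁻¹ :=
      ENNReal.inv_pos.2 (by simp [hw_top, ENNReal.add_ne_top])
    obtain ⟨b, hab, hb1, hsmall⟩ := small_tail ha1 hfin hε
    refine ⟨b, hab, hb1, w * ∫⁻ t in Ioo a b, L t, ?_, ?_⟩
    · rcases eq_or_ne w 0 with rfl | hw0
      · simpa using zero_lt_one
      · calc w * ∫⁻ t in Ioo a b, L t < w * (w + 1)⁻¹ :=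
              (ENNReal.mul_lt_mul_iff_right hw0 hw_top).2 hsmall
          _ ≤ (w + 1) * (w + 1)⁻¹ := mul_le_mul_left le_self_add _
          _ = 1 := ENNReal.mul_inv_cancel (by simp) (by simp [hw_top, ENNReal.add_ne_top])
    · intro x hx
      have hpt : ∀ t ∈ Ioo a x, L t * ENNReal.ofReal ((t - a) * t ^ ((1 - p) / p))
          ≤ (w * ENNReal.ofReal (x - a)) * L t := by
        intro t ht
        rw [ENNReal.ofReal_mul (by linarith [ht.1] : (0:ℝ) ≤ t - a)]
        calc L t * (ENNReal.ofReal (t - a) * ENNReal.ofReal (t ^ ((1 - p) / p)))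
            ≤ L t * (ENNReal.ofReal (x - a) * w) := by
              gcongr
              · exact ht.2.le
              · exact hw_bound t ⟨ht.1, lt_of_lt_of_le ht.2 (hx.2.trans hb1)⟩
          _ = (w * ENNReal.ofReal (x - a)) * L t := by ring
      calc ∫⁻ t in Ioo a x, L t * ENNReal.ofReal ((t - a) * t ^ ((1 - p) / p))
          ≤ ∫⁻ t in Ioo a x, (w * ENNReal.ofReal (x - a)) * L t := by
            apply lintegral_mono_ae
            rw [ae_restrict_iff' measurableSet_Ioo]
            exact ae_of_all _ hpt
        _ = (w * ENNReal.ofReal (x - a)) * ∫⁻ t in Ioo a x, L t :=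
            lintegral_const_mul' _ _ (ENNReal.mul_ne_top hw_top ENNReal.ofReal_ne_top)
        _ ≤ (w * ENNReal.ofReal (x - a)) * ∫⁻ t in Ioo a b, L t :=
            mul_le_mul_right (lintegral_mono_set (Ioo_subset_Ioo le_rfl hx.2)) _
        _ = (w * ∫⁻ t in Ioo a b, L t) * ENNReal.ofReal (x - a) := by ring
  · -- Hölder case : p > 1, a = 0
    push_neg at hcase
    obtain ⟨hpne, hale⟩ := hcase
    have hp1 : 1 < p := lt_of_le_of_ne hp (Ne.symm hpne)
    have hppos : 0 < p := by linarith
    have ha0 : a = 0 := le_antisymm (by simpa using hale) ha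
    subst ha0
    set q := Real.conjExponent p with hq_def
    have hpq : p.HolderConjugate q := Real.HolderConjugate.conjExponent hp1
    have hq1 : 1 < q := hpq.symm.lt
    set r : ℝ := q / p with hr_def
    have hr_pos : 0 < r := div_pos (by linarith) hppos
    have hrq : r + 1 = q := by
      have h1 : p - 1 ≠ 0 := sub_ne_zero.2 (ne_of_gt hp1)
      rw [hr_def, hq_def, Real.conjExponent]
      field_simp
      ring
    obtain ⟨b, hab, hb1, hsmall⟩ :=
      small_tail (L := fun t => L t ^ p) ha1 hLp (ε := 1) zero_lt_one
    set A := ∫⁻ t in Ioo (0:ℝ) b, L t ^ p with hA_def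
    refine ⟨b, hab, hb1, A ^ (1/p), ENNReal.rpow_lt_one hsmall (one_div_pos.2 hppos), ?_⟩
    intro x hx
    have hx0 : (0:ℝ) < x := hx.1
    have hx1 : x ≤ 1 := hx.2.trans hb1
    have hcongr : ∫⁻ t in Ioo (0:ℝ) x, L t * ENNReal.ofReal ((t - 0) * t ^ ((1 - p) / p))
        = ∫⁻ t in Ioo (0:ℝ) x, L t * ENNReal.ofReal (t ^ (1/p)) := by
      apply lintegral_congr_ae
      filter_upwards [ae_restrict_mem measurableSet_Ioo] with t ht
      congr 2
      rw [sub_zero]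
      nth_rewrite 1 [← Real.rpow_one t]
      rw [← Real.rpow_add ht.1]
      congr 1
      field_simp
      ring
    rw [hcongr]
    have hrr : volume.restrict (Ioo (0:ℝ) x)
        = (volume.restrict (Ioo (0:ℝ) 1)).restrict (Ioo 0 x) := by
      rw [Measure.restrict_restrict measurableSet_Ioo,
        inter_eq_self_of_subset_left (Ioo_subset_Ioo le_rfl hx1)]
    have hLmx : AEMeasurable L (volume.restrict (Ioo (0:ℝ) x)) := by
      rw [hrr]; exact hLm.restrict
    have hgm : AEMeasurable (fun t : ℝ => ENNReal.ofReal (t ^ (1/p)))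
        (volume.restrict (Ioo (0:ℝ) x)) :=
      (ENNReal.measurable_ofReal.comp (measurable_id.pow_const _)).aemeasurable
    have hholder := ENNReal.lintegral_mul_le_Lp_mul_Lq (volume.restrict (Ioo (0:ℝ) x)) hpq hLmx hgm
    simp only [Pi.mul_apply] at hholder
    have hsecond : (∫⁻ t in Ioo (0:ℝ) x, (ENNReal.ofReal (t ^ (1/p))) ^ q)
        ≤ ENNReal.ofReal (x ^ q) := by
      have heq : ∫⁻ t in Ioo (0:ℝ) x, (ENNReal.ofReal (t ^ (1/p))) ^ q
          = ∫⁻ t in Ioo (0:ℝ) x, ENNReal.ofReal (t ^ r) := by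
        apply lintegral_congr_ae
        filter_upwards [ae_restrict_mem measurableSet_Ioo] with t ht
        rw [ENNReal.ofReal_rpow_of_nonneg (Real.rpow_nonneg ht.1.le _) (by linarith),
          ← Real.rpow_mul ht.1.le]
        congr 2
        rw [hr_def]; field_simp
      rw [heq]
      have hint : IntegrableOn (fun t : ℝ => t ^ r) (Ioo 0 x) volume := by
        have h1 : IntervalIntegrable (fun t : ℝ => t ^ r) volume 0 x :=
          intervalIntegral.intervalIntegrable_rpow' (by linarith)
        rw [intervalIntegrable_iff_integrableOn_Ioc_of_le hx0.le] at h1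
        exact h1.mono_set Ioo_subset_Ioc_self
      have hnn : 0 ≤ᵐ[volume.restrict (Ioo (0:ℝ) x)] fun t : ℝ => t ^ r := by
        filter_upwards [ae_restrict_mem measurableSet_Ioo] with t ht
        simpa using Real.rpow_nonneg ht.1.le r
      rw [← MeasureTheory.ofReal_integral_eq_lintegral_ofReal hint hnn]
      apply ENNReal.ofReal_le_ofReal
      have hval : ∫ t in Ioo (0:ℝ) x, t ^ r = x ^ (r + 1) / (r + 1) := by
        rw [← integral_Ioc_eq_integral_Ioo, ← intervalIntegral.integral_of_le hx0.le,
          integral_rpow (Or.inl (by linarith)), Real.zero_rpow (by linarith)]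
        ring
      rw [hval]
      calc x ^ (r + 1) / (r + 1) ≤ x ^ (r + 1) :=
            div_le_self (Real.rpow_nonneg hx0.le _) (by linarith)
        _ = x ^ q := by rw [hrq]
    calc ∫⁻ t in Ioo (0:ℝ) x, L t * ENNReal.ofReal (t ^ (1/p))
        ≤ (∫⁻ t in Ioo (0:ℝ) x, L t ^ p) ^ (1/p)
            * (∫⁻ t in Ioo (0:ℝ) x, (ENNReal.ofReal (t ^ (1/p))) ^ q) ^ (1/q) := hholder
      _ ≤ A ^ (1/p) * (ENNReal.ofReal (x ^ q)) ^ (1/q) := by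
          refine mul_le_mul' (ENNReal.rpow_le_rpow ?_ (by positivity))
            (ENNReal.rpow_le_rpow hsecond (by positivity))
          rw [hA_def]
          exact lintegral_mono_set (Ioo_subset_Ioo le_rfl hx.2)
      _ = A ^ (1/p) * ENNReal.ofReal ((x ^ q) ^ (1/q)) := by
          rw [ENNReal.ofReal_rpow_of_nonneg (Real.rpow_nonneg hx0.le _) (by positivity)]
      _ = A ^ (1/p) * ENNReal.ofReal (x - 0) := by
          rw [← Real.rpow_mul hx0.le, mul_one_div, div_self (by linarith), Real.rpow_one,
            sub_zero]

noncomputable def lamAux (ψ : ℝ → ℝ) (p : ℝ) (x : ℝ) : ℝ :=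
  |deriv ψ x| / (|ψ x| * x ^ ((1 - p) / p))

noncomputable def LAux (ψ : ℝ → ℝ) (p : ℝ) (x : ℝ) : ℝ≥0∞ :=
  ENNReal.ofReal (lamAux ψ p x)

/-- If `φ` is Lipschitz on `[0,1]` with `φ 0 = 0`, and there are `p ≥ 1` and a nonnegative
`λ ∈ L^p(0,1)` with `|φ'(x)| ≤ λ(x) |φ(x)| x^((1-p)/p)` a.e. on `(0,1)`, then `φ ≡ 0`. -/
theorem stmt0 (φ : ℝ → ℝ) (K : NNReal) (hφ : LipschitzOnWith K φ (Icc 0 1))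
    (hφ0 : φ 0 = 0) (p : ℝ) (hp : 1 ≤ p) (lam : ℝ → ℝ)
    (hlam_nonneg : ∀ x ∈ Ioo (0:ℝ) 1, 0 ≤ lam x)
    (hlam_Lp : ∫⁻ x in Ioo (0:ℝ) 1, ENNReal.ofReal (lam x ^ p) < ⊤)
    (hineq : ∀ᵐ x ∂(volume.restrict (Ioo (0:ℝ) 1)),
      |deriv φ x| ≤ lam x * |φ x| * x ^ ((1 - p) / p)) :
    ∀ x ∈ Icc (0:ℝ) 1, φ x = 0 := by
  obtain ⟨ψ, hψK, hψeq⟩ := hφ.extend_real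
  suffices hψ0 : ∀ x ∈ Icc (0:ℝ) 1, ψ x = 0 by
    intro x hx; rw [hψeq hx]; exact hψ0 x hx
  have hppos : 0 < p := lt_of_lt_of_le zero_lt_one hp
  have hderiv_eq : ∀ x ∈ Ioo (0:ℝ) 1, deriv φ x = deriv ψ x := by
    intro x hx
    apply Filter.EventuallyEq.deriv_eq
    filter_upwards [isOpen_Ioo.mem_nhds hx] with y hy
    exact hψeq (Ioo_subset_Icc_self hy)
  have hψzero : ψ 0 = 0 := by
    rw [← hψeq (left_mem_Icc.2 zero_le_one)]; exact hφ0
  have hψm : Measurable ψ := hψK.continuous.measurable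
  have hlam'm : Measurable (lamAux ψ p) := by
    unfold lamAux
    exact (measurable_deriv ψ).abs.div (hψm.abs.mul (measurable_id.pow_const _))
  have hLm : Measurable (LAux ψ p) := by
    unfold LAux
    exact ENNReal.measurable_ofReal.comp hlam'm
  have hae_ineq : ∀ᵐ x ∂(volume.restrict (Ioo (0:ℝ) 1)),
      |deriv ψ x| ≤ lam x * |ψ x| * x ^ ((1 - p) / p) ∧ 0 ≤ lam x := by
    filter_upwards [hineq, ae_restrict_mem measurableSet_Ioo] with x hx hmem
    have h1 : φ x = ψ x := hψeq (Ioo_subset_Icc_self hmem)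
    have h2 : deriv φ x = deriv ψ x := hderiv_eq x hmem
    rw [h1, h2] at hx
    exact ⟨hx, hlam_nonneg x hmem⟩
  have hlam'_le : ∀ᵐ x ∂(volume.restrict (Ioo (0:ℝ) 1)),
      0 ≤ lamAux ψ p x ∧ lamAux ψ p x ≤ lam x := by
    filter_upwards [hae_ineq, ae_restrict_mem measurableSet_Ioo] with x hx' hmem
    obtain ⟨hx, hlx⟩ := hx'
    have hDnn : 0 ≤ |ψ x| * x ^ ((1 - p) / p) :=
      mul_nonneg (abs_nonneg _) (Real.rpow_nonneg hmem.1.le _)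
    have hlam'nn : 0 ≤ lamAux ψ p x := div_nonneg (abs_nonneg _) hDnn
    refine ⟨hlam'nn, ?_⟩
    rcases eq_or_lt_of_le hDnn with hD0 | hDpos
    · unfold lamAux
      rw [← hD0]
      simpa using hlx
    · unfold lamAux
      rw [div_le_iff₀ hDpos]
      calc |deriv ψ x| ≤ lam x * |ψ x| * x ^ ((1 - p) / p) := hx
        _ = lam x * (|ψ x| * x ^ ((1 - p) / p)) := by ring
  have hL_ineq : ∀ᵐ x ∂(volume.restrict (Ioo (0:ℝ) 1)),
      ENNReal.ofReal |deriv ψ x| ≤ LAux ψ p x * ENNReal.ofReal (|ψ x| * x ^ ((1 - p) / p)) := by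
    filter_upwards [hae_ineq, ae_restrict_mem measurableSet_Ioo] with x hx' hmem
    obtain ⟨hx, hlx⟩ := hx'
    have hDnn : 0 ≤ |ψ x| * x ^ ((1 - p) / p) :=
      mul_nonneg (abs_nonneg _) (Real.rpow_nonneg hmem.1.le _)
    rcases eq_or_lt_of_le hDnn with hD0 | hDpos
    · have hd0 : |deriv ψ x| ≤ 0 := by
        calc |deriv ψ x| ≤ lam x * |ψ x| * x ^ ((1 - p) / p) := hx
          _ = lam x * (|ψ x| * x ^ ((1 - p) / p)) := by ring
          _ = 0 := by rw [← hD0, mul_zero]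
      rw [ENNReal.ofReal_eq_zero.2 hd0]
      exact zero_le
    · have hlam'nn : 0 ≤ lamAux ψ p x := div_nonneg (abs_nonneg _) hDnn
      unfold LAux
      rw [← ENNReal.ofReal_mul hlam'nn]
      apply ENNReal.ofReal_le_ofReal
      unfold lamAux
      rw [div_mul_cancel₀ _ (ne_of_gt hDpos)]
  have hL_Lp : ∫⁻ x in Ioo (0:ℝ) 1, LAux ψ p x ^ p ≠ ⊤ := by
    have hmono : ∀ᵐ x ∂(volume.restrict (Ioo (0:ℝ) 1)),
        LAux ψ p x ^ p ≤ ENNReal.ofReal (lam x ^ p) := by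
      filter_upwards [hlam'_le] with x hx'
      obtain ⟨hnn, hle⟩ := hx'
      unfold LAux
      rw [ENNReal.ofReal_rpow_of_nonneg hnn hppos.le]
      exact ENNReal.ofReal_le_ofReal (Real.rpow_le_rpow hnn hle hppos.le)
    exact (lt_of_le_of_lt (lintegral_mono_ae hmono) hlam_Lp).ne
  have hL1 : ∫⁻ x in Ioo (0:ℝ) 1, LAux ψ p x ≠ ⊤ := by
    have hpt : ∀ x, LAux ψ p x ≤ 1 + LAux ψ p x ^ p := by
      intro x
      rcases le_total (LAux ψ p x) 1 with h | h
      · exact le_trans h (le_add_of_nonneg_right zero_le)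
      · calc LAux ψ p x = LAux ψ p x ^ (1:ℝ) := (ENNReal.rpow_one _).symm
          _ ≤ LAux ψ p x ^ p := ENNReal.rpow_le_rpow_of_exponent_le h hp
          _ ≤ 1 + LAux ψ p x ^ p := le_add_self
    have hsum : (∫⁻ x in Ioo (0:ℝ) 1, LAux ψ p x)
        ≤ ∫⁻ x in Ioo (0:ℝ) 1, (1 + LAux ψ p x ^ p) := lintegral_mono hpt
    rw [lintegral_add_left measurable_const] at hsum
    refine (lt_of_le_of_lt hsum ?_).ne
    apply ENNReal.add_lt_top.2
    constructor
    · simp [Real.volume_Ioo]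
    · exact lt_of_le_of_ne le_top hL_Lp
  have hmain : ∀ a, 0 ≤ a → a < 1 → ψ a = 0 →
      ∃ b, a < b ∧ b ≤ 1 ∧ ∀ x ∈ Icc a b, ψ x = 0 := by
    intro a ha ha1 hψa
    obtain ⟨b, hab, hb1, c, hc, hG⟩ := good_start hLm.aemeasurable hp hL1 hL_Lp ha ha1
    exact ⟨b, hab, hb1, iterate_vanish hψK hL_ineq ha hab hb1 hψa hc hG⟩
  set S := {b : ℝ | b ∈ Icc (0:ℝ) 1 ∧ ∀ x ∈ Icc (0:ℝ) b, ψ x = 0} with hS_def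
  have h0S : (0:ℝ) ∈ S := by
    refine ⟨⟨le_rfl, zero_le_one⟩, fun x hx => ?_⟩
    have : x = 0 := le_antisymm hx.2 hx.1
    rw [this]; exact hψzero
  have hbdd : BddAbove S := ⟨1, fun b hb => hb.1.2⟩
  set T := sSup S with hT_def
  have hT_mem : T ∈ Icc (0:ℝ) 1 :=
    ⟨le_csSup hbdd h0S, csSup_le ⟨0, h0S⟩ fun b hb => hb.1.2⟩
  have hψT_lt : ∀ x, 0 ≤ x → x < T → ψ x = 0 := by
    intro x hx hxT
    obtain ⟨b, hbS, hxb⟩ := exists_lt_of_lt_csSup ⟨0, h0S⟩ hxT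
    exact hbS.2 x ⟨hx, hxb.le⟩
  have hψT : ψ T = 0 := by
    rcases eq_or_lt_of_le hT_mem.1 with hT0 | hT0
    · rw [← hT0]; exact hψzero
    · have hclosed : IsClosed {x : ℝ | ψ x = 0} :=
        isClosed_eq hψK.continuous continuous_const
      have hsub : Ioo 0 T ⊆ {x : ℝ | ψ x = 0} := fun x hx => hψT_lt x hx.1.le hx.2
      have hTcl : T ∈ closure (Ioo 0 T) := by
        rw [closure_Ioo (ne_of_lt hT0)]
        exact ⟨hT0.le, le_rfl⟩
      have := closure_mono hsub hTcl
      rwa [hclosed.closure_eq] at this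
  have hTS : T ∈ S := by
    refine ⟨hT_mem, fun x hx => ?_⟩
    rcases eq_or_lt_of_le hx.2 with hxT | hxT
    · rw [hxT]; exact hψT
    · exact hψT_lt x hx.1 hxT
  have hT1 : T = 1 := by
    by_contra hne
    have hTlt : T < 1 := lt_of_le_of_ne hT_mem.2 hne
    obtain ⟨b, hTb, hb1, hvan⟩ := hmain T hT_mem.1 hTlt hψT
    have hbS : b ∈ S := by
      refine ⟨⟨le_trans hT_mem.1 hTb.le, hb1⟩, fun x hx => ?_⟩
      rcases le_total x T with h | h
      · exact hTS.2 x ⟨hx.1, h⟩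
      · exact hvan x ⟨h, hx.2⟩
    exact absurd (le_csSup hbdd hbS) (not_le.2 hTb)
  intro x hx
  exact hTS.2 x (by rw [hT1]; exact hx)
end

section
/- Let φ : [0,1] → ℝ be Lipschitz with φ(0) = 0, and suppose V : [0,1] → [0,∞) satisfies ∫_0^1 V(t)ⁿ t^{n−1} dt < ∞ and |φ'(t)| ≤ V(t)|φ(t)| for a.e. t ∈ (0,1). Then φ ≡ 0 on [0,1]. -/
open MeasureTheory Set Filter Topology intervalIntegral
open scoped ENNReal NNReal

section aux

/-- FTC for Lipschitz functions, via difference quotients and dominated convergence. -/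
lemma lipschitz_ftc {K : NNReal} {g : ℝ → ℝ} (hg : LipschitzWith K g) (a b : ℝ) (hab : a ≤ b) :
    g b - g a = ∫ t in a..b, deriv g t := by
  have hgc : Continuous g := hg.continuous
  set h : ℕ → ℝ := fun k => 1 / (k + 1) with hhdef
  have hpos : ∀ k, 0 < h k := fun k => by positivity
  have hlim0 : Tendsto h atTop (𝓝 0) := tendsto_one_div_add_atTop_nhds_zero_nat
  have hseq : ∀ x : ℝ, Tendsto (fun k => x + h k) atTop (𝓝[≠] x) := by
    intro x
    apply tendsto_nhdsWithin_of_tendsto_nhds_of_eventually_within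
    · simpa using (tendsto_const_nhds.add hlim0)
    · filter_upwards with k
      simp only [mem_compl_iff, mem_singleton_iff]
      have := hpos k; intro hxx; nlinarith [hxx]
  have havg : ∀ x : ℝ, Tendsto (fun k => (∫ t in x..(x + h k), g t) / h k) atTop (𝓝 (g x)) := by
    intro x
    have hH : HasDerivAt (fun u => ∫ t in x..u, g t) (g x) x :=
      integral_hasDerivAt_right (hgc.intervalIntegrable _ _)
        hgc.aestronglyMeasurable.stronglyMeasurableAtFilter hgc.continuousAt
    have := (hasDerivAt_iff_tendsto_slope.mp hH).comp (hseq x)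
    have h0 : (∫ t in x..x, g t) = 0 := integral_same
    convert this using 2 with k
    simp [slope, h0, Function.comp]
    rw [div_eq_inv_mul]
  have hA : ∀ k, (∫ t in a..b, (g (t + h k) - g t) / h k)
      = (∫ t in b..(b + h k), g t) / h k - (∫ t in a..(a + h k), g t) / h k := by
    intro k
    have hint : ∀ c d : ℝ, IntervalIntegrable g volume c d := fun c d =>
      hgc.intervalIntegrable c d
    have hint2 : ∀ c d : ℝ, IntervalIntegrable (fun t => g (t + h k)) volume c d := fun c d =>
      (hgc.comp (continuous_id.add continuous_const)).intervalIntegrable c d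
    rw [intervalIntegral.integral_div]
    rw [intervalIntegral.integral_sub (hint2 a b) (hint a b)]
    rw [intervalIntegral.integral_comp_add_right (fun t => g t) (h k)]
    have e1 : (∫ t in (a + h k)..(b + h k), g t)
        = (∫ t in (a + h k)..b, g t) + ∫ t in b..(b + h k), g t :=
      (integral_add_adjacent_intervals (hint _ _) (hint _ _)).symm
    have e2 : (∫ t in a..b, g t)
        = (∫ t in a..(a + h k), g t) + ∫ t in (a + h k)..b, g t :=
      (integral_add_adjacent_intervals (hint _ _) (hint _ _)).symm
    rw [e1, e2]; ring
  have hDCT : Tendsto (fun k => ∫ t in a..b, (g (t + h k) - g t) / h k) atTop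
      (𝓝 (∫ t in a..b, deriv g t)) := by
    rw [intervalIntegral.integral_of_le hab]
    have : ∀ k, (∫ t in a..b, (g (t + h k) - g t) / h k)
        = ∫ t in Ioc a b, (g (t + h k) - g t) / h k := fun k =>
      intervalIntegral.integral_of_le hab
    simp only [this]
    apply MeasureTheory.tendsto_integral_of_dominated_convergence (fun _ => (K : ℝ))
    · intro k
      exact ((hgc.comp (continuous_id.add continuous_const)).sub hgc).div_const
        (h k) |>.aestronglyMeasurable
    · exact integrable_const _
    · intro k
      filter_upwards with t
      have := hg.dist_le_mul (t + h k) t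
      rw [Real.dist_eq, Real.dist_eq] at this
      have hk := hpos k
      rw [Real.norm_eq_abs, abs_div, abs_of_pos hk, div_le_iff₀ hk]
      calc |g (t + h k) - g t| ≤ K * |t + h k - t| := this
        _ = K * h k := by rw [show t + h k - t = h k by ring, abs_of_pos hk]
    · have hae : ∀ᵐ t ∂(volume.restrict (Ioc a b)), DifferentiableAt ℝ g t :=
        ae_restrict_of_ae hg.ae_differentiableAt
      filter_upwards [hae] with t ht
      have := (hasDerivAt_iff_tendsto_slope.mp ht.hasDerivAt).comp (hseq t)
      convert this using 2 with k
      simp [slope, Function.comp]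
      rw [div_eq_inv_mul]
  have hlimA : Tendsto (fun k => ∫ t in a..b, (g (t + h k) - g t) / h k) atTop
      (𝓝 (g b - g a)) := by
    simp only [hA]
    exact (havg b).sub (havg a)
  exact tendsto_nhds_unique hlimA hDCT

/-- The derivative of a Lipschitz function is bounded by the Lipschitz constant. -/
lemma lipschitz_abs_deriv_le {K : NNReal} {g : ℝ → ℝ} (hg : LipschitzWith K g) (s : ℝ) :
    |deriv g s| ≤ K := by
  by_cases hs : DifferentiableAt ℝ g s
  · have h1 : Tendsto (slope g s) (𝓝[≠] s) (𝓝 (deriv g s)) :=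
      hasDerivAt_iff_tendsto_slope.mp hs.hasDerivAt
    have h2 : Tendsto (fun y => |slope g s y|) (𝓝[≠] s) (𝓝 |deriv g s|) :=
      h1.abs
    refine le_of_tendsto h2 ?_
    filter_upwards [self_mem_nhdsWithin] with y hy
    have hys : y - s ≠ 0 := sub_ne_zero.mpr hy
    have := hg.dist_le_mul y s
    rw [Real.dist_eq, Real.dist_eq] at this
    rw [slope_def_field, div_eq_inv_mul, abs_mul, abs_inv]
    rw [show g y - g s = g y - g s from rfl]
    calc |y - s|⁻¹ * |g y - g s| ≤ |y - s|⁻¹ * (K * |y - s|) := by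
          apply mul_le_mul_of_nonneg_left this (by positivity)
      _ = K := by field_simp
  · simp [deriv_zero_of_not_differentiableAt hs]

lemma eq_zero_of_le_half_pow {x C : ℝ≥0∞} (hC : C ≠ ⊤)
    (h : ∀ m : ℕ, x ≤ 2⁻¹ ^ m * C) : x = 0 := by
  have hlim : Tendsto (fun m : ℕ => (2⁻¹ : ℝ≥0∞) ^ m * C) atTop (𝓝 0) := by
    have h1 : Tendsto (fun m : ℕ => (2⁻¹ : ℝ≥0∞) ^ m) atTop (𝓝 0) :=
      ENNReal.tendsto_pow_atTop_nhds_zero_of_lt_one (by simp [ENNReal.inv_lt_one, one_lt_two])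
    simpa using ENNReal.Tendsto.mul_const h1 (Or.inr hC)
  have := ge_of_tendsto' hlim h
  simpa using le_antisymm (le_of_le_of_eq (le_refl x) rfl |>.trans (by simpa using this)) (zero_le (a := x))

/-- Key a.e.-derivative integral bound for Lipschitz functions. -/
lemma key_bound {K : NNReal} {g : ℝ → ℝ} (hg : LipschitzWith K g) {W : ℝ → ℝ}
    (hineq : ∀ᵐ s ∂(volume.restrict (Ioo (0:ℝ) 1)), |deriv g s| ≤ W s * |g s|)
    {a t : ℝ} (ha : 0 ≤ a) (hat : a ≤ t) (ht : t ≤ 1) :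
    ENNReal.ofReal |g t| ≤ ENNReal.ofReal |g a|
      + ∫⁻ s in Ioc a t, ENNReal.ofReal (W s * |g s|) ∂volume := by
  have hder_meas : Measurable (deriv g) := measurable_deriv g
  have hInt : IntegrableOn (fun s => |deriv g s|) (Ioc a t) volume := by
    refine Integrable.mono' (integrable_const (K : ℝ))
      hder_meas.abs.aestronglyMeasurable ?_
    filter_upwards with s
    rw [Real.norm_eq_abs, abs_abs]
    exact lipschitz_abs_deriv_le hg s
  have h1 : |g t| ≤ |g a| + ∫ s in Ioc a t, |deriv g s| ∂volume := by
    have hftc := lipschitz_ftc hg a t hat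
    have h2 : |g t - g a| ≤ ∫ s in a..t, |deriv g s| := by
      rw [hftc]
      exact intervalIntegral.abs_integral_le_integral_abs hat
    rw [intervalIntegral.integral_of_le hat] at h2
    calc |g t| = |g a + (g t - g a)| := by ring_nf
      _ ≤ |g a| + |g t - g a| := abs_add_le _ _
      _ ≤ |g a| + ∫ s in Ioc a t, |deriv g s| ∂volume := by linarith
  have h3 : ENNReal.ofReal (∫ s in Ioc a t, |deriv g s| ∂volume)
      = ∫⁻ s in Ioc a t, ENNReal.ofReal |deriv g s| ∂volume :=
    MeasureTheory.ofReal_integral_eq_lintegral_ofReal hInt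
      (Filter.Eventually.of_forall fun s => abs_nonneg _)
  have h4 : (∫⁻ s in Ioc a t, ENNReal.ofReal |deriv g s| ∂volume)
      ≤ ∫⁻ s in Ioc a t, ENNReal.ofReal (W s * |g s|) ∂volume := by
    apply lintegral_mono_ae
    have hae1 : ∀ᵐ s ∂volume, s ∈ Ioo (0:ℝ) 1 → |deriv g s| ≤ W s * |g s| :=
      (ae_restrict_iff' measurableSet_Ioo).mp hineq
    have hae2 : ∀ᵐ s ∂(volume.restrict (Ioc a t)), s ∈ Ioo (0:ℝ) 1 → |deriv g s| ≤ W s * |g s| :=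
      ae_restrict_of_ae hae1
    have hmem : ∀ᵐ s ∂(volume.restrict (Ioc a t)), s ∈ Ioc a t :=
      ae_restrict_mem measurableSet_Ioc
    have hne1 : ∀ᵐ s ∂(volume.restrict (Ioc a t)), s ≠ 1 := by
      apply ae_restrict_of_ae
      rw [ae_iff]
      have : {s : ℝ | ¬ s ≠ 1} = {1} := by ext s; simp
      rw [this]
      exact measure_singleton 1
    filter_upwards [hae2, hmem, hne1] with s hs hsm hs1
    apply ENNReal.ofReal_le_ofReal
    exact hs ⟨lt_of_le_of_lt ha hsm.1, lt_of_le_of_ne (hsm.2.trans ht) hs1⟩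
  calc ENNReal.ofReal |g t|
      ≤ ENNReal.ofReal (|g a| + ∫ s in Ioc a t, |deriv g s| ∂volume) :=
        ENNReal.ofReal_le_ofReal h1
    _ = ENNReal.ofReal |g a| + ENNReal.ofReal (∫ s in Ioc a t, |deriv g s| ∂volume) :=
        ENNReal.ofReal_add (abs_nonneg _) (by positivity)
    _ ≤ _ := by rw [h3]; exact add_le_add_right h4 _

/-- Weighted Hölder estimate near zero. -/
lemma holder_near_zero {n : ℕ} (hn : 1 ≤ n) {W : ℝ → ℝ} (hWm : Measurable W)
    (hW0 : ∀ s, 0 ≤ W s) {t : ℝ} (ht : 0 < t) :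
    (∫⁻ s in Ioc (0:ℝ) t, ENNReal.ofReal (W s * s) ∂volume)
      ≤ (∫⁻ s in Ioc (0:ℝ) t, ENNReal.ofReal (W s ^ n * s ^ (n - 1)) ∂volume) ^ ((1:ℝ)/n)
        * ENNReal.ofReal t := by
  rcases eq_or_lt_of_le hn with h1 | h2
  · -- n = 1
    subst h1
    simp only [pow_one, Nat.sub_self, pow_zero, mul_one, Nat.cast_one, ne_eq,
      one_ne_zero, not_false_iff]
    rw [show (1:ℝ)/1 = 1 by norm_num, ENNReal.rpow_one]
    calc (∫⁻ s in Ioc (0:ℝ) t, ENNReal.ofReal (W s * s) ∂volume)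
        ≤ ∫⁻ s in Ioc (0:ℝ) t, ENNReal.ofReal (W s) * ENNReal.ofReal t ∂volume := by
          apply setLIntegral_mono' measurableSet_Ioc
          intro s hs
          rw [ENNReal.ofReal_mul (hW0 s)]
          exact mul_le_mul_right (ENNReal.ofReal_le_ofReal hs.2) _
      _ = (∫⁻ s in Ioc (0:ℝ) t, ENNReal.ofReal (W s) ∂volume) * ENNReal.ofReal t :=
          lintegral_mul_const _ hWm.ennreal_ofReal
  · -- n ≥ 2
    have hn2 : 2 ≤ n := h2
    have hnR : (1:ℝ) < n := by exact_mod_cast h2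
    have hn0 : (n:ℝ) ≠ 0 := by positivity
    have hn1 : (n:ℝ) - 1 ≠ 0 := by
      intro h; apply absurd hnR; rw [show (n:ℝ) = 1 by linarith]; simp
    have hn1pos : (0:ℝ) < (n:ℝ) - 1 := by linarith
    set p : ℝ := (n : ℝ) with hp
    set q : ℝ := p / (p - 1) with hq
    have hpq : p.HolderConjugate q := Real.holderConjugate_iff.mpr ⟨hnR, by rw [hq]; field_simp; ring⟩
    set f : ℝ → ℝ≥0∞ := fun s => ENNReal.ofReal (W s) * ENNReal.ofReal s ^ ((p - 1)/p) with hf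
    set G : ℝ → ℝ≥0∞ := fun s => ENNReal.ofReal s ^ ((1:ℝ)/p) with hG
    have hfm : AEMeasurable f (volume.restrict (Ioc (0:ℝ) t)) :=
      (hWm.ennreal_ofReal.mul ((measurable_id.ennreal_ofReal).pow_const _)).aemeasurable
    have hGm : AEMeasurable G (volume.restrict (Ioc (0:ℝ) t)) :=
      ((measurable_id.ennreal_ofReal).pow_const _).aemeasurable
    have step0 : (∫⁻ s in Ioc (0:ℝ) t, ENNReal.ofReal (W s * s) ∂volume)
        = ∫⁻ s in Ioc (0:ℝ) t, f s * G s ∂volume := by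
      apply setLIntegral_congr_fun measurableSet_Ioc
      intro s hs
      have hs0 : ENNReal.ofReal s ≠ 0 := by
        simp [ENNReal.ofReal_eq_zero]; exact hs.1
      rw [hf, hG]
      dsimp only
      rw [mul_assoc, ← ENNReal.rpow_add _ _ hs0 ENNReal.ofReal_ne_top]
      rw [show (p-1)/p + 1/p = 1 by field_simp; ring, ENNReal.rpow_one,
        ENNReal.ofReal_mul (hW0 s)]
    have holder := ENNReal.lintegral_mul_le_Lp_mul_Lq (volume.restrict (Ioc (0:ℝ) t)) hpq hfm hGm
    have stepf : (∫⁻ s in Ioc (0:ℝ) t, f s ^ p ∂volume)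
        = ∫⁻ s in Ioc (0:ℝ) t, ENNReal.ofReal (W s ^ n * s ^ (n - 1)) ∂volume := by
      apply setLIntegral_congr_fun measurableSet_Ioc
      intro s hs
      rw [hf]
      dsimp only
      rw [ENNReal.mul_rpow_of_nonneg _ _ (by positivity : (0:ℝ) ≤ p)]
      rw [← ENNReal.rpow_mul]
      rw [show (p-1)/p * p = p - 1 by field_simp]
      have e1 : ENNReal.ofReal (W s) ^ p = ENNReal.ofReal (W s ^ n) := by
        rw [hp, ENNReal.rpow_natCast, ← ENNReal.ofReal_pow (hW0 s)]
      have e2 : ENNReal.ofReal s ^ (p - 1) = ENNReal.ofReal (s ^ (n - 1)) := by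
        rw [show p - 1 = ((n - 1 : ℕ) : ℝ) by rw [hp, Nat.cast_sub hn]; simp,
          ENNReal.rpow_natCast, ← ENNReal.ofReal_pow hs.1.le]
      rw [e1, e2, ← ENNReal.ofReal_mul (pow_nonneg (hW0 s) n)]
    have stepG : (∫⁻ s in Ioc (0:ℝ) t, G s ^ q ∂volume) ^ (1/q) ≤ ENNReal.ofReal t := by
      have hq0 : 0 < q := hpq.symm.pos
      have hbound : (∫⁻ s in Ioc (0:ℝ) t, G s ^ q ∂volume)
          ≤ ENNReal.ofReal t ^ ((1/p) * q) * ENNReal.ofReal t := by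
        calc (∫⁻ s in Ioc (0:ℝ) t, G s ^ q ∂volume)
            ≤ ∫⁻ _ in Ioc (0:ℝ) t, ENNReal.ofReal t ^ ((1/p) * q) ∂volume := by
              apply setLIntegral_mono' measurableSet_Ioc
              intro s hs
              rw [hG]
              dsimp only
              rw [← ENNReal.rpow_mul]
              exact ENNReal.rpow_le_rpow (ENNReal.ofReal_le_ofReal hs.2) (by positivity)
          _ = ENNReal.ofReal t ^ ((1/p) * q) * ENNReal.ofReal t := by
              rw [setLIntegral_const]
              rw [Real.volume_Ioc]
              simp
      calc (∫⁻ s in Ioc (0:ℝ) t, G s ^ q ∂volume) ^ (1/q)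
          ≤ (ENNReal.ofReal t ^ ((1/p) * q) * ENNReal.ofReal t) ^ (1/q) :=
            ENNReal.rpow_le_rpow hbound (by positivity)
        _ = ENNReal.ofReal t ^ ((1/p) * q * (1/q)) * ENNReal.ofReal t ^ (1/q) := by
            rw [ENNReal.mul_rpow_of_nonneg _ _ (by positivity : (0:ℝ) ≤ 1/q)]
            rw [← ENNReal.rpow_mul]
        _ = ENNReal.ofReal t := by
            rw [← ENNReal.rpow_add _ _ (by simp [ENNReal.ofReal_eq_zero]; exact ht)
              ENNReal.ofReal_ne_top]
            rw [show (1/p) * q * (1/q) + 1/q = 1 by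
              rw [hq]; field_simp; ring]
            exact ENNReal.rpow_one _
    calc (∫⁻ s in Ioc (0:ℝ) t, ENNReal.ofReal (W s * s) ∂volume)
        = ∫⁻ s in Ioc (0:ℝ) t, f s * G s ∂volume := step0
      _ ≤ (∫⁻ s in Ioc (0:ℝ) t, f s ^ p ∂volume) ^ (1/p)
          * (∫⁻ s in Ioc (0:ℝ) t, G s ^ q ∂volume) ^ (1/q) := holder
      _ ≤ (∫⁻ s in Ioc (0:ℝ) t, ENNReal.ofReal (W s ^ n * s ^ (n - 1)) ∂volume) ^ ((1:ℝ)/n)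
          * ENNReal.ofReal t := by
            rw [stepf]
            exact mul_le_mul_right stepG _

end aux

/-- Radial-ray Gronwall-type uniqueness: if `φ` is Lipschitz on `[0,1]` with `φ 0 = 0`,
`V ≥ 0` satisfies `∫_0^1 V(t)ⁿ t^{n-1} dt < ∞` and `|φ'(t)| ≤ V(t)|φ(t)|` a.e.,
then `φ ≡ 0` on `[0,1]`. -/
theorem stmt12 (n : ℕ) (hn : 1 ≤ n) (φ : ℝ → ℝ) (K : NNReal)
    (hφ : LipschitzOnWith K φ (Icc 0 1)) (hφ0 : φ 0 = 0)
    (V : ℝ → ℝ) (hV_nonneg : ∀ t, 0 ≤ V t)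
    (hV : ∫⁻ t in Ioo (0:ℝ) 1, ENNReal.ofReal (V t ^ n * t ^ (n - 1)) < ⊤)
    (hineq : ∀ᵐ t ∂(volume.restrict (Ioo (0:ℝ) 1)), |deriv φ t| ≤ V t * |φ t|) :
    ∀ t ∈ Icc (0:ℝ) 1, φ t = 0 := by
  obtain ⟨g, hgL, hfg⟩ := hφ.extend_real
  suffices hgoal : ∀ t ∈ Icc (0:ℝ) 1, g t = 0 by
    intro t ht; rw [hfg ht]; exact hgoal t ht
  have hgc : Continuous g := hgL.continuous
  have hg0 : g 0 = 0 := by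
    rw [← hfg (by constructor <;> norm_num : (0:ℝ) ∈ Icc (0:ℝ) 1), hφ0]
  have hnR0 : (n:ℝ) ≠ 0 := by positivity
  -- transfer the differential inequality to g
  have hineqg : ∀ᵐ s ∂(volume.restrict (Ioo (0:ℝ) 1)), |deriv g s| ≤ V s * |g s| := by
    have hmem : ∀ᵐ s ∂(volume.restrict (Ioo (0:ℝ) 1)), s ∈ Ioo (0:ℝ) 1 :=
      ae_restrict_mem measurableSet_Ioo
    filter_upwards [hineq, hmem] with s hs hsm
    have hde : deriv φ s = deriv g s := by
      apply Filter.EventuallyEq.deriv_eq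
      filter_upwards [isOpen_Ioo.mem_nhds hsm] with u hu
      exact hfg (Ioo_subset_Icc_self hu)
    rw [← hde, ← hfg (Ioo_subset_Icc_self hsm)]
    exact hs
  -- replace V by a measurable weight W
  set W : ℝ → ℝ := fun s => if g s = 0 then 0 else |deriv g s| / |g s| with hWdef
  have hW0 : ∀ s, 0 ≤ W s := by
    intro s; rw [hWdef]; dsimp only; split <;> positivity
  have hWm : Measurable W := by
    apply Measurable.ite (hgc.measurable (measurableSet_singleton 0)) measurable_const
    exact (measurable_deriv g).abs.div hgc.measurable.abs
  have hWV : ∀ᵐ s ∂(volume.restrict (Ioo (0:ℝ) 1)), W s ≤ V s := by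
    filter_upwards [hineqg] with s hs
    rw [hWdef]; dsimp only
    split
    · exact hV_nonneg s
    · rename_i h
      rw [div_le_iff₀ (abs_pos.mpr h)]
      exact hs
  have hWineq : ∀ᵐ s ∂(volume.restrict (Ioo (0:ℝ) 1)), |deriv g s| ≤ W s * |g s| := by
    filter_upwards [hineqg] with s hs
    by_cases h : g s = 0
    · rw [hWdef]; dsimp only; rw [if_pos h, zero_mul]
      simpa [h] using hs
    · rw [hWdef]; dsimp only; rw [if_neg h, div_mul_cancel₀ _ (abs_ne_zero.mpr h)]
  have hWint : ∫⁻ s in Ioo (0:ℝ) 1, ENNReal.ofReal (W s ^ n * s ^ (n - 1)) ∂volume < ⊤ := by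
    refine lt_of_le_of_lt (lintegral_mono_ae ?_) hV
    filter_upwards [hWV, ae_restrict_mem measurableSet_Ioo] with s h1 h2
    exact ENNReal.ofReal_le_ofReal
      (mul_le_mul_of_nonneg_right (pow_le_pow_left₀ (hW0 s) h1 n) (pow_nonneg h2.1.le _))
  have hFm : Measurable (fun s : ℝ => ENNReal.ofReal (W s ^ n * s ^ (n - 1))) :=
    ((hWm.pow_const n).mul (measurable_id.pow_const (n - 1))).ennreal_ofReal
  -- the finite weighted measure
  set ν : Measure ℝ := (volume.restrict (Ioo (0:ℝ) 1)).withDensity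
    (fun s => ENNReal.ofReal (W s ^ n * s ^ (n - 1))) with hνdef
  have hνle : ∀ A : Set ℝ, MeasurableSet A →
      ν A = ∫⁻ s in A ∩ Ioo (0:ℝ) 1, ENNReal.ofReal (W s ^ n * s ^ (n - 1)) ∂volume := by
    intro A hA
    rw [hνdef, withDensity_apply _ hA, Measure.restrict_restrict hA]
  have hνfin : ν univ ≠ ⊤ := by
    rw [hνdef, withDensity_apply _ MeasurableSet.univ, Measure.restrict_univ]
    exact hWint.ne
  -- smallness of ν near 0
  obtain ⟨δ, hδ0, hδ1, hδν⟩ : ∃ δ : ℝ, 0 < δ ∧ δ ≤ 1 ∧ ν (Ioo 0 δ) ≤ 2⁻¹ ^ n := by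
    have hsets : ∀ k : ℕ, NullMeasurableSet (Ioo (0:ℝ) (1/(k+1))) ν := fun k =>
      measurableSet_Ioo.nullMeasurableSet
    have hanti : Antitone (fun k : ℕ => Ioo (0:ℝ) (1/(k+1))) := by
      intro k l hkl
      apply Ioo_subset_Ioo le_rfl
      apply one_div_le_one_div_of_le (by positivity)
      exact_mod_cast add_le_add_left (Nat.cast_le.mpr hkl) 1
    have hint : (⋂ k : ℕ, Ioo (0:ℝ) (1/(k+1))) = ∅ := by
      apply eq_empty_iff_forall_notMem.mpr
      intro x hx
      rw [mem_iInter] at hx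
      obtain ⟨k, hk⟩ := exists_nat_one_div_lt (hx 0).1
      exact absurd (hx k).2 (not_lt.mpr hk.le)
    have htend := tendsto_measure_iInter_atTop hsets hanti
      ⟨0, ((measure_mono (subset_univ _)).trans_lt (lt_top_iff_ne_top.mpr hνfin)).ne⟩
    rw [hint] at htend
    simp only [measure_empty] at htend
    have hpow : (0:ℝ≥0∞) < 2⁻¹ ^ n :=
      ENNReal.pow_pos (ENNReal.inv_pos.mpr (by norm_num)) n
    obtain ⟨k, hk⟩ := (htend.eventually_lt_const hpow).exists
    refine ⟨1/(k+1), by positivity, ?_, hk.le⟩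
    rw [div_le_one (by positivity)]
    have : (0:ℝ) ≤ (k:ℝ) := Nat.cast_nonneg k
    linarith
  have hIbound : ∀ t : ℝ, 0 < t → t ≤ δ →
      (∫⁻ s in Ioc (0:ℝ) t, ENNReal.ofReal (W s ^ n * s ^ (n - 1)) ∂volume) ≤ ν (Ioo 0 δ) := by
    intro t ht0 htδ
    calc (∫⁻ s in Ioc (0:ℝ) t, ENNReal.ofReal (W s ^ n * s ^ (n - 1)) ∂volume)
        = ∫⁻ s in Ioo (0:ℝ) t, ENNReal.ofReal (W s ^ n * s ^ (n - 1)) ∂volume :=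
          setLIntegral_congr (Ioo_ae_eq_Ioc (a := (0:ℝ)) (b := t)).symm
      _ ≤ ∫⁻ s in Ioo (0:ℝ) δ, ENNReal.ofReal (W s ^ n * s ^ (n - 1)) ∂volume :=
          lintegral_mono_set (Ioo_subset_Ioo le_rfl htδ)
      _ = ν (Ioo 0 δ) := by
          rw [hνle _ measurableSet_Ioo,
            inter_eq_self_of_subset_left (Ioo_subset_Ioo le_rfl hδ1)]
  have hhalf : (ν (Ioo 0 δ)) ^ ((1:ℝ)/n) ≤ 2⁻¹ := by
    calc (ν (Ioo 0 δ)) ^ ((1:ℝ)/n) ≤ ((2⁻¹ : ℝ≥0∞) ^ n) ^ ((1:ℝ)/n) :=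
          ENNReal.rpow_le_rpow hδν (by positivity)
      _ = 2⁻¹ := by
          rw [← ENNReal.rpow_natCast 2⁻¹ n, ← ENNReal.rpow_mul,
            show (n:ℝ) * ((1:ℝ)/n) = 1 by field_simp, ENNReal.rpow_one]
  -- iteration near 0
  have hC1 : ∀ m : ℕ, ∀ t ∈ Icc (0:ℝ) δ,
      ENNReal.ofReal |g t| ≤ 2⁻¹ ^ m * ENNReal.ofReal (K * t) := by
    intro m
    induction m with
    | zero =>
      intro t ht
      simp only [pow_zero, one_mul]
      apply ENNReal.ofReal_le_ofReal
      calc |g t| = |g t - g 0| := by rw [hg0, sub_zero]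
        _ ≤ K * |t - 0| := by
            have := hgL.dist_le_mul t 0
            rwa [Real.dist_eq, Real.dist_eq] at this
        _ = K * t := by rw [sub_zero, abs_of_nonneg ht.1]
    | succ m ih =>
      intro t ht
      rcases eq_or_lt_of_le ht.1 with h0 | h0
      · simp [← h0, hg0]
      calc ENNReal.ofReal |g t|
          ≤ ENNReal.ofReal |g 0| + ∫⁻ s in Ioc 0 t, ENNReal.ofReal (W s * |g s|) ∂volume :=
            key_bound hgL hWineq le_rfl ht.1 (ht.2.trans hδ1)
        _ = ∫⁻ s in Ioc 0 t, ENNReal.ofReal (W s * |g s|) ∂volume := by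
            rw [hg0]; simp
        _ ≤ ∫⁻ s in Ioc 0 t, ENNReal.ofReal (W s * s) * (2⁻¹ ^ m * ENNReal.ofReal K) ∂volume := by
            apply setLIntegral_mono' measurableSet_Ioc
            intro s hs
            rw [ENNReal.ofReal_mul (hW0 s)]
            calc ENNReal.ofReal (W s) * ENNReal.ofReal |g s|
                ≤ ENNReal.ofReal (W s) * (2⁻¹ ^ m * ENNReal.ofReal (K * s)) :=
                  mul_le_mul_right (ih s ⟨hs.1.le, hs.2.trans ht.2⟩) _
              _ = ENNReal.ofReal (W s * s) * (2⁻¹ ^ m * ENNReal.ofReal K) := by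
                  rw [ENNReal.ofReal_mul (hW0 s), ENNReal.ofReal_mul K.coe_nonneg]
                  ring
        _ = (∫⁻ s in Ioc 0 t, ENNReal.ofReal (W s * s) ∂volume)
            * (2⁻¹ ^ m * ENNReal.ofReal K) :=
            lintegral_mul_const _ (hWm.mul measurable_id).ennreal_ofReal
        _ ≤ ((∫⁻ s in Ioc (0:ℝ) t, ENNReal.ofReal (W s ^ n * s ^ (n - 1)) ∂volume) ^ ((1:ℝ)/n)
            * ENNReal.ofReal t) * (2⁻¹ ^ m * ENNReal.ofReal K) :=
            mul_le_mul_left (holder_near_zero hn hWm hW0 h0) _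
        _ ≤ (2⁻¹ * ENNReal.ofReal t) * (2⁻¹ ^ m * ENNReal.ofReal K) := by
            apply mul_le_mul_left
            apply mul_le_mul_left
            exact le_trans (ENNReal.rpow_le_rpow (hIbound t h0 ht.2) (by positivity)) hhalf
        _ = 2⁻¹ ^ (m+1) * ENNReal.ofReal (K * t) := by
            rw [ENNReal.ofReal_mul K.coe_nonneg]; ring
  have hzero1 : ∀ t ∈ Icc (0:ℝ) δ, g t = 0 := by
    intro t ht
    have h := eq_zero_of_le_half_pow (C := ENNReal.ofReal (K * t)) ENNReal.ofReal_ne_top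
      (fun m => hC1 m t ht)
    rw [ENNReal.ofReal_eq_zero] at h
    exact abs_eq_zero.mp (le_antisymm h (abs_nonneg _))
  -- continuation step
  have hC2 : ∀ T : ℝ, 0 < T → T < 1 → g T = 0 →
      ∃ b, T < b ∧ b ≤ 1 ∧ ∀ t ∈ Icc T b, g t = 0 := by
    intro T hT0 hT1 hgT
    have hTpow : (0:ℝ) < T ^ (n-1) := by positivity
    set c : ℝ≥0∞ := (ENNReal.ofReal (T ^ (n-1)))⁻¹ with hc
    have hcne : c ≠ ⊤ := by
      rw [hc, ENNReal.inv_ne_top, ne_eq, ENNReal.ofReal_eq_zero, not_le]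
      exact hTpow
    have htend : Tendsto (fun k : ℕ => c * ν (Ioc T (T + 1/(k+1)))
        + ENNReal.ofReal (1/(k+1))) atTop (𝓝 0) := by
      have h1 : Tendsto (fun k : ℕ => ν (Ioc T (T + 1/(k+1)))) atTop (𝓝 0) := by
        have hsets : ∀ k : ℕ, NullMeasurableSet (Ioc T (T + 1/(k+1))) ν := fun k =>
          measurableSet_Ioc.nullMeasurableSet
        have hanti : Antitone (fun k : ℕ => Ioc T (T + 1/(k+1))) := by
          intro k l hkl
          apply Ioc_subset_Ioc le_rfl
          apply add_le_add_right
          apply one_div_le_one_div_of_le (by positivity)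
          exact_mod_cast add_le_add_left (Nat.cast_le.mpr hkl) 1
        have hint : (⋂ k : ℕ, Ioc T (T + 1/(k+1))) = ∅ := by
          apply eq_empty_iff_forall_notMem.mpr
          intro x hx
          rw [mem_iInter] at hx
          obtain ⟨k, hk⟩ := exists_nat_one_div_lt (sub_pos.mpr (hx 0).1)
          exact absurd (hx k).2 (not_le.mpr (by linarith))
        have := tendsto_measure_iInter_atTop hsets hanti
          ⟨0, ((measure_mono (subset_univ _)).trans_lt (lt_top_iff_ne_top.mpr hνfin)).ne⟩
        rw [hint] at this
        simpa [Function.comp_def] using this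
      have h2 : Tendsto (fun k : ℕ => ENNReal.ofReal (1/((k:ℝ)+1))) atTop (𝓝 0) := by
        have := ENNReal.tendsto_ofReal (tendsto_one_div_add_atTop_nhds_zero_nat)
        simpa using this
      have := (ENNReal.Tendsto.const_mul h1 (Or.inr hcne)).add h2
      simpa using this
    obtain ⟨k, hk⟩ := (htend.eventually_lt_const
      (by norm_num : (0:ℝ≥0∞) < 2⁻¹)).exists
    have hδ'0 : (0:ℝ) < 1/(k+1) := by positivity
    set b := min (T + 1/((k:ℝ)+1)) 1 with hbdef
    have hTb : T < b := lt_min (by linarith) hT1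
    have hb1 : b ≤ 1 := min_le_right _ _
    refine ⟨b, hTb, hb1, ?_⟩
    -- the weight is ν-a.e. equal on [T,b]
    have hνIoc : (∫⁻ s in Ioc T b, ENNReal.ofReal (W s ^ n * s ^ (n-1)) ∂volume)
        = ν (Ioc T b) := by
      rw [hνle _ measurableSet_Ioc]
      apply setLIntegral_congr
      rw [MeasureTheory.ae_eq_set]
      constructor
      · apply measure_mono_null _ (measure_singleton (1:ℝ))
        intro x hx
        obtain ⟨hx1, hx2⟩ := hx
        have hx0 : 0 < x := lt_trans hT0 hx1.1
        have hxb : x ≤ 1 := hx1.2.trans hb1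
        rcases eq_or_lt_of_le hxb with h | h
        · simp [h]
        · exact absurd ⟨hx1, hx0, h⟩ hx2
      · have : (Ioc T b ∩ Ioo 0 1) \ Ioc T b = ∅ := by
          rw [diff_eq_empty]; exact inter_subset_left
        rw [this]; exact measure_empty
    have hJ : (∫⁻ s in Ioc T b, ENNReal.ofReal (W s) ∂volume) ≤ 2⁻¹ := by
      have hpt : ∀ s ∈ Ioc T b, ENNReal.ofReal (W s)
          ≤ c * ENNReal.ofReal (W s ^ n * s ^ (n-1)) + 1 := by
        intro s hs
        have hspow : T ^ (n-1) ≤ s ^ (n-1) := pow_le_pow_left₀ hT0.le hs.1.le _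
        have hs0 : (0:ℝ) < s := lt_trans hT0 hs.1
        have hreal : W s ≤ W s ^ n * s ^ (n-1) / T ^ (n-1) + 1 := by
          rcases le_total (W s) 1 with h | h
          · have h0 : (0:ℝ) ≤ W s ^ n * s ^ (n-1) / T ^ (n-1) := by positivity
            linarith
          · have h1 : W s ≤ W s ^ n := le_self_pow₀ h (by omega)
            have h2 : W s ^ n * T ^ (n-1) ≤ W s ^ n * s ^ (n-1) :=
              mul_le_mul_of_nonneg_left hspow (pow_nonneg (hW0 s) n)
            have h3 : W s ^ n ≤ W s ^ n * s ^ (n-1) / T ^ (n-1) := by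
              rw [le_div_iff₀ hTpow]; exact h2
            linarith
        calc ENNReal.ofReal (W s)
            ≤ ENNReal.ofReal (W s ^ n * s ^ (n-1) / T ^ (n-1) + 1) :=
              ENNReal.ofReal_le_ofReal hreal
          _ = ENNReal.ofReal (W s ^ n * s ^ (n-1)) / ENNReal.ofReal (T ^ (n-1)) + 1 := by
              rw [ENNReal.ofReal_add (by positivity) zero_le_one,
                ENNReal.ofReal_div_of_pos hTpow, ENNReal.ofReal_one]
          _ = c * ENNReal.ofReal (W s ^ n * s ^ (n-1)) + 1 := by
              rw [hc, ENNReal.div_eq_inv_mul]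
      calc (∫⁻ s in Ioc T b, ENNReal.ofReal (W s) ∂volume)
          ≤ ∫⁻ s in Ioc T b, (c * ENNReal.ofReal (W s ^ n * s ^ (n-1)) + 1) ∂volume :=
            setLIntegral_mono' measurableSet_Ioc hpt
        _ = c * (∫⁻ s in Ioc T b, ENNReal.ofReal (W s ^ n * s ^ (n-1)) ∂volume)
            + volume (Ioc T b) := by
            rw [lintegral_add_right _ measurable_const, lintegral_const_mul _ hFm,
              lintegral_one, Measure.restrict_apply_univ]
        _ ≤ c * ν (Ioc T (T + 1/(k+1))) + ENNReal.ofReal (1/(k+1)) := by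
            apply add_le_add
            · rw [hνIoc]
              exact mul_le_mul_right (measure_mono (Ioc_subset_Ioc le_rfl (min_le_left _ _))) _
            · rw [Real.volume_Ioc]
              apply ENNReal.ofReal_le_ofReal
              have := min_le_left (T + 1/((k:ℝ)+1)) 1
              linarith [this]
        _ ≤ 2⁻¹ := hk.le
    -- iteration past T
    have hC2' : ∀ m : ℕ, ∀ t ∈ Icc T b,
        ENNReal.ofReal |g t| ≤ 2⁻¹ ^ m * ENNReal.ofReal (K:ℝ) := by
      intro m
      induction m with
      | zero =>
        intro t ht
        simp only [pow_zero, one_mul]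
        apply ENNReal.ofReal_le_ofReal
        calc |g t| = |g t - g T| := by rw [hgT, sub_zero]
          _ ≤ K * |t - T| := by
              have := hgL.dist_le_mul t T
              rwa [Real.dist_eq, Real.dist_eq] at this
          _ ≤ K * 1 := by
              apply mul_le_mul_of_nonneg_left _ K.coe_nonneg
              rw [abs_of_nonneg (sub_nonneg.mpr ht.1)]
              have := ht.2.trans hb1
              linarith [hT0]
          _ = K := mul_one _
      | succ m ih =>
        intro t ht
        calc ENNReal.ofReal |g t|
            ≤ ENNReal.ofReal |g T| + ∫⁻ s in Ioc T t, ENNReal.ofReal (W s * |g s|) ∂volume :=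
              key_bound hgL hWineq hT0.le ht.1 (ht.2.trans hb1)
          _ = ∫⁻ s in Ioc T t, ENNReal.ofReal (W s * |g s|) ∂volume := by
              rw [hgT]; simp
          _ ≤ ∫⁻ s in Ioc T t, ENNReal.ofReal (W s) * (2⁻¹ ^ m * ENNReal.ofReal (K:ℝ)) ∂volume := by
              apply setLIntegral_mono' measurableSet_Ioc
              intro s hs
              rw [ENNReal.ofReal_mul (hW0 s)]
              exact mul_le_mul_right (ih s ⟨hs.1.le, hs.2.trans ht.2⟩) _
          _ = (∫⁻ s in Ioc T t, ENNReal.ofReal (W s) ∂volume)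
              * (2⁻¹ ^ m * ENNReal.ofReal (K:ℝ)) :=
              lintegral_mul_const _ hWm.ennreal_ofReal
          _ ≤ 2⁻¹ * (2⁻¹ ^ m * ENNReal.ofReal (K:ℝ)) :=
              mul_le_mul_left
                (le_trans (lintegral_mono_set (Ioc_subset_Ioc le_rfl ht.2)) hJ) _
          _ = 2⁻¹ ^ (m+1) * ENNReal.ofReal (K:ℝ) := by ring
    intro t ht
    have h := eq_zero_of_le_half_pow (C := ENNReal.ofReal (K:ℝ)) ENNReal.ofReal_ne_top
      (fun m => hC2' m t ht)
    rw [ENNReal.ofReal_eq_zero] at h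
    exact abs_eq_zero.mp (le_antisymm h (abs_nonneg _))
  -- the supremum argument
  set Z : Set ℝ := {T | T ∈ Icc (0:ℝ) 1 ∧ ∀ s ∈ Icc (0:ℝ) T, g s = 0} with hZdef
  have hδZ : δ ∈ Z := ⟨⟨hδ0.le, hδ1⟩, hzero1⟩
  have hZne : Z.Nonempty := ⟨δ, hδZ⟩
  have hZbdd : BddAbove Z := ⟨1, fun x hx => hx.1.2⟩
  set T := sSup Z with hTdef
  have hTZle : δ ≤ T := le_csSup hZbdd hδZ
  have hT1 : T ≤ 1 := csSup_le hZne (fun x hx => hx.1.2)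
  have hT0 : 0 < T := lt_of_lt_of_le hδ0 hTZle
  have hgz : ∀ s ∈ Icc (0:ℝ) T, g s = 0 := by
    intro s hs
    rcases eq_or_lt_of_le hs.2 with hsT | hsT
    · have hlt : ∀ u ∈ Ico (0:ℝ) T, g u = 0 := by
        intro u hu
        obtain ⟨z, hz, huz⟩ := exists_lt_of_lt_csSup hZne hu.2
        exact hz.2 u ⟨hu.1, huz.le⟩
      have htendg : Tendsto g (𝓝[<] T) (𝓝 (g T)) :=
        (hgc.tendsto T).mono_left nhdsWithin_le_nhds
      have hev : g =ᶠ[𝓝[<] T] (fun _ => (0:ℝ)) := by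
        filter_upwards [Ioo_mem_nhdsLT_of_mem (⟨hT0, le_refl T⟩ : T ∈ Ioc 0 T)] with u hu
        exact hlt u ⟨hu.1.le, hu.2⟩
      have htend0 : Tendsto g (𝓝[<] T) (𝓝 0) :=
        Tendsto.congr' hev.symm tendsto_const_nhds
      rw [hsT]
      exact tendsto_nhds_unique htendg htend0
    · obtain ⟨z, hz, hsz⟩ := exists_lt_of_lt_csSup hZne hsT
      exact hz.2 s ⟨hs.1, hsz.le⟩
  by_cases hTlt : T < 1
  · obtain ⟨b, hTb, hb1, hb⟩ := hC2 T hT0 hTlt (hgz T ⟨hT0.le, le_rfl⟩)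
    have hbZ : b ∈ Z := by
      refine ⟨⟨hT0.le.trans hTb.le, hb1⟩, ?_⟩
      intro s hs
      rcases le_total s T with h | h
      · exact hgz s ⟨hs.1, h⟩
      · exact hb s ⟨h, hs.2⟩
    exact absurd (le_csSup hZbdd hbZ) (not_le.mpr hTb)
  · push_neg at hTlt
    intro t ht'
    exact hgz t ⟨ht'.1, ht'.2.trans hTlt⟩
end

section
/- Let f : (a,b) → ℝ be a non-constant locally Lipschitz function on an open interval with f(c) = 0 for some c ∈ (a,b). Then ∫_{(a,b) \ f⁻¹(0)} |f'(x)/f(x)| dx = ∞. -/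
open MeasureTheory Set

lemma log_diff_le {ε p q : ℝ} (hε : 0 < ε) (hp : ε ≤ |p|) (hq : ε ≤ |q|) :
    |Real.log p - Real.log q| ≤ |p - q| / ε := by
  have key : ∀ r s : ℝ, ε ≤ |r| → ε ≤ |s| → |r| ≤ |s| →
      |Real.log r - Real.log s| ≤ |r - s| / ε := by
    intro r s hr hs hrs
    have hr0 : 0 < |r| := hε.trans_le hr
    have hs0 : 0 < |s| := hε.trans_le hs
    rw [← Real.log_abs r, ← Real.log_abs s]
    have h1 : Real.log |r| ≤ Real.log |s| := Real.log_le_log hr0 hrs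
    rw [abs_sub_comm, abs_of_nonneg (by linarith)]
    have h2 : Real.log |s| - Real.log |r| = Real.log (|s| / |r|) := by
      rw [Real.log_div (ne_of_gt hs0) (ne_of_gt hr0)]
    rw [h2]
    have h3 : Real.log (|s| / |r|) ≤ |s| / |r| - 1 :=
      Real.log_le_sub_one_of_pos (div_pos hs0 hr0)
    have h4 : |s| / |r| - 1 = (|s| - |r|) / |r| := by field_simp
    have h6 : |s| - |r| ≤ |r - s| := by
      have := abs_sub_abs_le_abs_sub s r
      rwa [abs_sub_comm s r] at this
    have h5 : (|s| - |r|) / |r| ≤ |r - s| / ε :=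
      div_le_div₀ (abs_nonneg _) h6 hε hr
    linarith
  rcases le_total |p| |q| with h | h
  · exact key p q hp hq h
  · rw [abs_sub_comm, abs_sub_comm p q]; exact key q p hq hp h

lemma lip_glue {f : ℝ → ℝ} {K1 K2 : NNReal} {u w v : ℝ} (huw : u ≤ w) (hwv : w ≤ v)
    (h1 : LipschitzOnWith K1 f (Icc u w)) (h2 : LipschitzOnWith K2 f (Icc w v)) :
    LipschitzOnWith (K1 + K2) f (Icc u v) := by
  rw [lipschitzOnWith_iff_dist_le_mul] at *
  intro x hx y hy
  have hw : w ∈ Icc u w := ⟨huw, le_rfl⟩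
  have hw' : w ∈ Icc w v := ⟨le_rfl, hwv⟩
  have main : ∀ x y : ℝ, x ∈ Icc u v → y ∈ Icc u v → x ≤ y → dist (f x) (f y) ≤ (K1 + K2) * dist x y := by
    intro x y hx hy hxy
    rcases le_total y w with h | h
    · calc dist (f x) (f y) ≤ K1 * dist x y := h1 x ⟨hx.1, hxy.trans h⟩ y ⟨hy.1, h⟩
        _ ≤ (K1 + K2) * dist x y := by
          apply mul_le_mul_of_nonneg_right _ dist_nonneg
          push_cast; linarith [NNReal.coe_nonneg K2]
    · rcases le_total x w with h' | h'
      · calc dist (f x) (f y) ≤ dist (f x) (f w) + dist (f w) (f y) := dist_triangle _ _ _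
          _ ≤ K1 * dist x w + K2 * dist w y :=
            add_le_add (h1 x ⟨hx.1, h'⟩ w hw) (h2 w hw' y ⟨h, hy.2⟩)
          _ ≤ K1 * dist x y + K2 * dist x y := by
            have d1 : dist x w ≤ dist x y := by
              rw [Real.dist_eq, Real.dist_eq, abs_of_nonpos (by linarith), abs_of_nonpos (by linarith)]
              linarith
            have d2 : dist w y ≤ dist x y := by
              rw [Real.dist_eq, Real.dist_eq, abs_of_nonpos (by linarith), abs_of_nonpos (by linarith)]
              linarith
            exact add_le_add (mul_le_mul_of_nonneg_left d1 (NNReal.coe_nonneg _))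
              (mul_le_mul_of_nonneg_left d2 (NNReal.coe_nonneg _))
          _ = (K1 + K2) * dist x y := by push_cast; ring
      · calc dist (f x) (f y) ≤ K2 * dist x y := h2 x ⟨h', hx.2⟩ y ⟨h, hy.2⟩
          _ ≤ (K1 + K2) * dist x y := by
            apply mul_le_mul_of_nonneg_right _ dist_nonneg
            push_cast; linarith [NNReal.coe_nonneg K1]
  rcases le_total x y with h | h
  · exact main x y hx hy h
  · rw [dist_comm, dist_comm x y]; exact main y x hy hx h

lemma lip_compact {f : ℝ → ℝ} {u v : ℝ} (huv : u ≤ v)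
    (H : ∀ x ∈ Icc u v, ∃ K : NNReal, ∃ t ∈ nhds x, LipschitzOnWith K f t) :
    ∃ K : NNReal, LipschitzOnWith K f (Icc u v) := by
  set S : Set ℝ := {w | w ∈ Icc u v ∧ ∃ K : NNReal, LipschitzOnWith K f (Icc u w)} with hS
  have huS : u ∈ S := by
    refine ⟨⟨le_rfl, huv⟩, 0, ?_⟩
    rw [Icc_self, lipschitzOnWith_iff_dist_le_mul]
    rintro x rfl y rfl
    simp
  have hne : S.Nonempty := ⟨u, huS⟩
  have hbdd : BddAbove S := ⟨v, fun w hw => hw.1.2⟩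
  set s := sSup S with hs
  have hsu : u ≤ s := le_csSup hbdd huS
  have hsv : s ≤ v := csSup_le hne fun w hw => hw.1.2
  obtain ⟨K₀, t, ht, hlip⟩ := H s ⟨hsu, hsv⟩
  obtain ⟨r, hr, hball⟩ := Metric.mem_nhds_iff.1 ht
  obtain ⟨w, hwS, hw⟩ : ∃ w ∈ S, s - r < w := exists_lt_of_lt_csSup hne (by linarith)
  obtain ⟨⟨huw, hwv⟩, Kw, hKw⟩ := hwS
  have hws : w ≤ s := le_csSup hbdd (by exact ⟨⟨huw, hwv⟩, Kw, hKw⟩)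
  set z := min v (s + r/2) with hz
  have hsz : s ≤ z := le_min hsv (by linarith)
  have hsub : Icc w z ⊆ Metric.ball s r := by
    intro x hx
    rw [Metric.mem_ball, Real.dist_eq, abs_lt]
    have h1 : x ≤ s + r/2 := hx.2.trans (min_le_right _ _)
    constructor <;> [linarith [hx.1]; linarith]
  have hzS : z ∈ S := by
    refine ⟨⟨huw.trans (hws.trans hsz), min_le_left _ _⟩, Kw + K₀, ?_⟩
    exact lip_glue huw (hws.trans hsz) hKw ((hlip.mono hball).mono hsub)
  have hzs : z ≤ s := le_csSup hbdd hzS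
  have hsv' : s = v := by
    by_contra hne'
    have : s < v := lt_of_le_of_ne hsv hne'
    have : s < z := lt_min this (by linarith)
    linarith
  obtain ⟨_, K, hK⟩ := hzS
  exact ⟨K, hK.mono (Icc_subset_Icc le_rfl (le_antisymm hzs hsz ▸ hsv' ▸ le_rfl))⟩

lemma lip_ftc {L : NNReal} {g : ℝ → ℝ} (hg : LipschitzWith L g) {u v : ℝ} (huv : u ≤ v) :
    g v - g u ≤ ∫ x in Ioc u v, deriv g x := by
  set h : ℝ → ℝ := fun x => L * x - g x with hh
  have hmono : Monotone h := by
    intro x y hxy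
    have := hg.dist_le_mul x y
    rw [Real.dist_eq, Real.dist_eq] at this
    have h4 : |x - y| = y - x := by rw [abs_sub_comm]; exact abs_of_nonneg (by linarith)
    rw [h4] at this
    have h5 := neg_abs_le (g x - g y)
    simp only [hh]
    linarith
  have hcont : Continuous h := (continuous_const.mul continuous_id).sub hg.continuous
  set μ := hmono.stieltjesFunction.measure with hμ
  set D : ℝ → ℝ := fun x => (Measure.rnDeriv μ volume x).toReal with hD
  have hDd : ∀ᵐ x, HasDerivAt h (D x) x := hmono.ae_hasDerivAt
  have hgd : ∀ᵐ x, DifferentiableAt ℝ g x := hg.ae_differentiableAt_of_real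
  have key : ∀ᵐ x, deriv g x = L - D x := by
    filter_upwards [hDd, hgd] with x hx hgx
    have h1 : HasDerivAt (fun y : ℝ => (L : ℝ) * y) L x := by
      simpa using (hasDerivAt_id x).const_mul (L : ℝ)
    have h2 : HasDerivAt (fun y => (L : ℝ) * y - h y) ((L : ℝ) - D x) x := h1.sub hx
    have h3 : (fun y => (L : ℝ) * y - h y) = g := by funext y; simp [hh]
    rw [h3] at h2
    exact h2.deriv
  have hsf : ∀ x, hmono.stieltjesFunction x = h x := by
    intro x
    rw [hmono.stieltjesFunction_eq]
    exact rightLim_eq_of_tendsto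
      (hcont.continuousAt.continuousWithinAt)
  have hμIoc : μ (Ioc u v) = ENNReal.ofReal (h v - h u) := by
    rw [hμ, StieltjesFunction.measure_Ioc, hsf, hsf]
  have hμfin : μ (Ioc u v) ≠ ⊤ := by rw [hμIoc]; exact ENNReal.ofReal_ne_top
  have Dint : IntegrableOn D (Ioc u v) volume :=
    Measure.integrableOn_toReal_rnDeriv hμfin
  have hint1 : ∫ x in Ioc u v, deriv g x = ∫ x in Ioc u v, ((L : ℝ) - D x) := by
    apply integral_congr_ae
    exact ae_restrict_of_ae key
  have hint2 : ∫ x in Ioc u v, ((L : ℝ) - D x) = (L : ℝ) * (v - u) - ∫ x in Ioc u v, D x := by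
    rw [integral_sub (integrableOn_const (by simp [Real.volume_Ioc]) : IntegrableOn (fun _ => (L : ℝ)) (Ioc u v) volume) Dint]
    congr 1
    rw [setIntegral_const, measureReal_def, Real.volume_Ioc, ENNReal.toReal_ofReal (by linarith), smul_eq_mul, mul_comm]
  have hDle : ∫ x in Ioc u v, D x ≤ h v - h u := by
    have := Measure.setIntegral_toReal_rnDeriv_le (μ := μ) (ν := volume) (s := Ioc u v) hμfin
    rw [measureReal_def, hμIoc, ENNReal.toReal_ofReal (by have := hmono huv; linarith)] at this
    exact this
  rw [hint1, hint2]
  have : h v - h u = (L : ℝ) * v - g v - ((L : ℝ) * u - g u) := rfl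
  linarith

lemma lip_deriv_le {L : NNReal} {g : ℝ → ℝ} (hg : LipschitzWith L g) (x : ℝ)
    (hx : DifferentiableAt ℝ g x) : |deriv g x| ≤ L := by
  have ht : Filter.Tendsto (slope g x) (nhdsWithin x {x}ᶜ) (nhds (deriv g x)) :=
    hasDerivAt_iff_tendsto_slope.1 hx.hasDerivAt
  refine le_of_tendsto ht.abs ?_
  filter_upwards [self_mem_nhdsWithin] with y hy
  have hy' : y ≠ x := Set.mem_compl_singleton_iff.mp hy
  have hyx : y - x ≠ 0 := sub_ne_zero.2 hy'
  rw [slope_def_field]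
  have := hg.dist_le_mul y x
  rw [Real.dist_eq, Real.dist_eq] at this
  rw [abs_div, div_le_iff₀ (abs_pos.2 hyx)]
  exact this

lemma lip_ftc_abs {L : NNReal} {g : ℝ → ℝ} (hg : LipschitzWith L g) {u v : ℝ} (huv : u ≤ v) :
    |g v - g u| ≤ ∫ x in Ioc u v, |deriv g x| := by
  have hmeas : Measurable (deriv g) := measurable_deriv g
  have hint : IntegrableOn (deriv g) (Ioc u v) := by
    refine Integrable.mono' (integrableOn_const (by simp [Real.volume_Ioc]) : IntegrableOn (fun _ => (L : ℝ)) _ _) hmeas.aestronglyMeasurable ?_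
    filter_upwards [ae_restrict_of_ae hg.ae_differentiableAt_of_real] with x hx
    exact lip_deriv_le hg x hx
  have h1 : g v - g u ≤ ∫ x in Ioc u v, deriv g x := lip_ftc hg huv
  have hneg : LipschitzWith L (fun x => -g x) := by
    intro x y
    simpa [edist_neg_neg] using hg x y
  have h2 : -g v - -g u ≤ ∫ x in Ioc u v, deriv (fun y => -g y) x := lip_ftc hneg huv
  have h3 : ∫ x in Ioc u v, deriv (fun y => -g y) x = -∫ x in Ioc u v, deriv g x := by
    rw [← integral_neg]
    exact integral_congr_ae (Filter.Eventually.of_forall fun x => deriv.neg)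
  have h4 : |∫ x in Ioc u v, deriv g x| ≤ ∫ x in Ioc u v, |deriv g x| := by
    simpa [Real.norm_eq_abs] using
      norm_integral_le_integral_norm (μ := volume.restrict (Ioc u v)) (deriv g)
  rw [h3] at h2
  rcases abs_cases (∫ x in Ioc u v, deriv g x) with ⟨he, _⟩ | ⟨he, _⟩ <;>
    rw [abs_le] <;> constructor <;> linarith

lemma core {f : ℝ → ℝ} {d x0 : ℝ} (hdx : d < x0)
    (H : ∀ x ∈ Icc d x0, ∃ K : NNReal, ∃ t ∈ nhds x, LipschitzOnWith K f t)
    (hfd : f d = 0) (hne : ∀ x ∈ Ioc d x0, f x ≠ 0) :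
    ∫⁻ x in Ioc d x0, ENNReal.ofReal (|deriv f x / f x|) = ⊤ := by
  by_contra hI
  set I := ∫⁻ x in Ioc d x0, ENNReal.ofReal (|deriv f x / f x|) with hIdef
  set C := I.toReal with hC
  set δ := |f x0| * Real.exp (-(C+1)) with hδ
  have hfx0 : f x0 ≠ 0 := hne x0 ⟨hdx, le_rfl⟩
  have hδpos : 0 < δ := mul_pos (abs_pos.2 hfx0) (Real.exp_pos _)
  -- continuity of f at d
  obtain ⟨K₀, t₀, ht₀, hl₀⟩ := H d ⟨le_rfl, hdx.le⟩
  have hcont_d : ContinuousAt f d := hl₀.continuousOn.continuousAt ht₀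
  have htend : Filter.Tendsto f (nhds d) (nhds 0) := hfd ▸ hcont_d
  have hev : ∀ᶠ x in nhdsWithin d (Ioi d), |f x| < δ ∧ x ∈ Ioo d x0 := by
    have h1 : ∀ᶠ x in nhdsWithin d (Ioi d), |f x| < δ := by
      apply Filter.Eventually.filter_mono nhdsWithin_le_nhds
      have := htend.eventually (eventually_abs_sub_lt 0 hδpos)
      simpa using this
    exact h1.and (Ioo_mem_nhdsGT_of_mem ⟨le_rfl, hdx⟩)
  obtain ⟨u, hu1, hu2⟩ := hev.exists
  obtain ⟨hud, hux0⟩ := hu2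
  -- Lipschitz on Icc u x0
  obtain ⟨K, hK⟩ := lip_compact hux0.le fun x hx =>
    H x ⟨hud.le.trans hx.1, hx.2⟩
  have hKdist := lipschitzOnWith_iff_dist_le_mul.1 hK
  have hfcont : ContinuousOn f (Icc u x0) := hK.continuousOn
  -- minimum of |f| on Icc u x0
  obtain ⟨z, hz, hzmin'⟩ := (isCompact_Icc (a := u) (b := x0)).exists_isMinOn
    (nonempty_Icc.2 hux0.le) (continuous_abs.comp_continuousOn hfcont)
  have hzmin : ∀ y ∈ Icc u x0, |f z| ≤ |f y| := fun y hy => hzmin' hy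
  set ε := |f z| with hε
  have hIccIoc : Icc u x0 ⊆ Ioc d x0 := fun y hy => ⟨hud.trans_le hy.1, hy.2⟩
  have hεpos : 0 < ε := abs_pos.2 (hne z (hIccIoc hz))
  have hεle : ∀ y ∈ Icc u x0, ε ≤ |f y| := hzmin
  -- log ∘ f is Lipschitz on Icc u x0
  set Kg : NNReal := K * (Real.toNNReal ε)⁻¹ with hKg
  have hKgcoe : (Kg : ℝ) = K / ε := by
    rw [hKg]
    push_cast
    rw [Real.coe_toNNReal _ hεpos.le]
    ring
  have hglip : LipschitzOnWith Kg (fun x => Real.log (f x)) (Icc u x0) := by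
    rw [lipschitzOnWith_iff_dist_le_mul]
    intro x hx y hy
    rw [Real.dist_eq, Real.dist_eq, hKgcoe]
    calc |Real.log (f x) - Real.log (f y)| ≤ |f x - f y| / ε :=
          log_diff_le hεpos (hεle x hx) (hεle y hy)
      _ ≤ (K * |x - y|) / ε := by
          rw [div_le_div_iff_of_pos_right hεpos]
          have := hKdist x hx y hy
          rwa [Real.dist_eq, Real.dist_eq] at this
      _ = K / ε * |x - y| := by ring
  -- extend f and log∘f to global Lipschitz functions
  obtain ⟨F, hF, hFeq⟩ := hK.extend_real
  obtain ⟨G, hG, hGeq⟩ := hglip.extend_real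
  -- a.e. on Ioc u x0, |deriv G| = |deriv f / f|
  have hae : ∀ᵐ x ∂(volume.restrict (Ioc u x0)), |deriv G x| = |deriv f x / f x| := by
    have hne0 : ∀ᵐ x : ℝ, x ≠ x0 := by
      rw [ae_iff]
      have : {x : ℝ | ¬x ≠ x0} = {x0} := by ext y; simp
      rw [this]
      exact Real.volume_singleton
    filter_upwards [ae_restrict_mem measurableSet_Ioc,
      ae_restrict_of_ae hF.ae_differentiableAt_of_real,
      ae_restrict_of_ae hne0] with x hx hFd hx0
    have hxIoo : x ∈ Ioo u x0 := ⟨hx.1, lt_of_le_of_ne hx.2 hx0⟩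
    have hmem : Ioo u x0 ∈ nhds x := isOpen_Ioo.mem_nhds hxIoo
    have hFf : F =ᶠ[nhds x] f :=
      Filter.eventually_of_mem hmem fun y hy => (hFeq (Ioo_subset_Icc_self hy)).symm
    have hfd' : DifferentiableAt ℝ f x := hFf.differentiableAt_iff.1 hFd
    have hfx : f x ≠ 0 := hne x (hIccIoc (Ioo_subset_Icc_self hxIoo))
    have hlog : HasDerivAt (fun y => Real.log (f y)) ((f x)⁻¹ * deriv f x) x :=
      (Real.hasDerivAt_log hfx).comp x hfd'.hasDerivAt
    have hGf : G =ᶠ[nhds x] fun y => Real.log (f y) :=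
      Filter.eventually_of_mem hmem fun y hy => (hGeq (Ioo_subset_Icc_self hy)).symm
    rw [hGf.deriv_eq, hlog.deriv]
    rw [div_eq_inv_mul]
  -- FTC bound
  have hftc : |G x0 - G u| ≤ ∫ x in Ioc u x0, |deriv G x| := lip_ftc_abs hG hux0.le
  -- measurability
  have hfae : AEMeasurable f (volume.restrict (Ioc u x0)) :=
    (hfcont.mono Ioc_subset_Icc_self).aemeasurable measurableSet_Ioc
  have habs_ae : AEMeasurable (fun x => |deriv f x / f x|) (volume.restrict (Ioc u x0)) :=
    (continuous_abs.measurable.comp_aemeasurable ((measurable_deriv f).aemeasurable.div hfae))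
  -- the integral is bounded by C
  have hsub : Ioc u x0 ⊆ Ioc d x0 := Ioc_subset_Ioc hud.le le_rfl
  have hlint_le : ∫⁻ x in Ioc u x0, ENNReal.ofReal (|deriv f x / f x|) ≤ I :=
    lintegral_mono' (Measure.restrict_mono hsub le_rfl) le_rfl
  have hlint_fin : ∫⁻ x in Ioc u x0, ENNReal.ofReal (|deriv f x / f x|) ≠ ⊤ :=
    fun h => hI (top_le_iff.1 (h ▸ hlint_le))
  have hint_eq : ∫ x in Ioc u x0, |deriv f x / f x| =
      (∫⁻ x in Ioc u x0, ENNReal.ofReal (|deriv f x / f x|)).toReal := by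
    rw [integral_eq_lintegral_of_nonneg_ae
      (Filter.Eventually.of_forall fun x => abs_nonneg _)
      habs_ae.aestronglyMeasurable]
  have hint_le : ∫ x in Ioc u x0, |deriv f x / f x| ≤ C := by
    rw [hint_eq]
    exact ENNReal.toReal_mono hI hlint_le
  -- putting it together
  have heq1 : ∫ x in Ioc u x0, |deriv G x| = ∫ x in Ioc u x0, |deriv f x / f x| :=
    integral_congr_ae hae
  have hGx0 : G x0 = Real.log (f x0) := (hGeq ⟨hux0.le, le_rfl⟩).symm
  have hGu : G u = Real.log (f u) := (hGeq ⟨le_rfl, hux0.le⟩).symm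
  have hlogu : Real.log (f u) < Real.log (f x0) - (C + 1) := by
    rw [← Real.log_abs (f u), ← Real.log_abs (f x0)]
    have hfu : f u ≠ 0 := hne u ⟨hud, hux0.le⟩
    have h1 : Real.log |f u| < Real.log δ := Real.log_lt_log (abs_pos.2 hfu) hu1
    rw [hδ, Real.log_mul (abs_ne_zero.2 hfx0) (Real.exp_ne_zero _), Real.log_exp] at h1
    linarith
  have hlb : C + 1 < |G x0 - G u| := by
    rw [hGx0, hGu]
    have : C + 1 < Real.log (f x0) - Real.log (f u) := by linarith
    exact this.trans_le (le_abs_self _)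
  linarith [hftc, heq1 ▸ hftc]

/-- One-dimensional case: if `f` is non-constant and locally Lipschitz on `(a,b)` with a
zero `c ∈ (a,b)`, then `∫_{(a,b) \ f⁻¹(0)} |f'/f| dx = ∞`. -/
theorem stmt13 (a b : ℝ) (hab : a < b) (f : ℝ → ℝ)
    (hf : ∀ x ∈ Ioo a b, ∃ K : NNReal, ∃ t ∈ nhds x, LipschitzOnWith K f t)
    (hnc : ¬ ∃ c : ℝ, ∀ x ∈ Ioo a b, f x = c)
    (c : ℝ) (hc : c ∈ Ioo a b) (hfc : f c = 0) :
    ∫⁻ x in Ioo a b \ f ⁻¹' {0}, ENNReal.ofReal (|deriv f x / f x|) = ⊤ := by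
  push_neg at hnc
  obtain ⟨x0, hx0mem, hx0⟩ := hnc 0
  obtain ⟨hac, hcb⟩ := hc
  obtain ⟨hax0, hx0b⟩ := hx0mem
  have hcont : ContinuousOn f (Ioo a b) := by
    intro x hx
    obtain ⟨K, t, ht, hl⟩ := hf x hx
    exact (hl.continuousOn.continuousAt ht).continuousWithinAt
  have hcx0 : c ≠ x0 := fun h => hx0 (h ▸ hfc)
  rcases lt_or_gt_of_ne hcx0 with hlt | hgt
  · -- c < x0 : zero to the left of x0
    set Z := {x | x ∈ Icc c x0 ∧ f x = 0} with hZ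
    have hZeq : Z = Icc c x0 ∩ f ⁻¹' {0} := by ext y; simp [hZ, and_comm]
    have hIccsub : Icc c x0 ⊆ Ioo a b := fun y hy => ⟨hac.trans_le hy.1, lt_of_le_of_lt hy.2 hx0b⟩
    have hZclosed : IsClosed Z := by
      rw [hZeq]
      exact (hcont.mono hIccsub).preimage_isClosed_of_isClosed isClosed_Icc isClosed_singleton
    have hZne : Z.Nonempty := ⟨c, ⟨le_rfl, hlt.le⟩, hfc⟩
    have hZbdd : BddAbove Z := ⟨x0, fun y hy => hy.1.2⟩
    set d := sSup Z with hd
    have hdZ : d ∈ Z := hZclosed.csSup_mem hZne hZbdd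
    have hcd : c ≤ d := hdZ.1.1
    have hdx0' : d ≤ x0 := hdZ.1.2
    have hfd : f d = 0 := hdZ.2
    have hdx0 : d < x0 := lt_of_le_of_ne hdx0' (fun h => hx0 (h ▸ hfd))
    have hIccsub2 : Icc d x0 ⊆ Ioo a b := fun y hy =>
      hIccsub ⟨hcd.trans hy.1, hy.2⟩
    have hne : ∀ x ∈ Ioc d x0, f x ≠ 0 := by
      intro x hx hfx
      have : x ∈ Z := ⟨⟨hcd.trans hx.1.le, hx.2⟩, hfx⟩
      exact absurd (le_csSup hZbdd this) (not_le.2 hx.1)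
    have hcore := core hdx0 (fun x hx => hf x (hIccsub2 hx)) hfd hne
    have hsub : Ioc d x0 ⊆ Ioo a b \ f ⁻¹' {0} := by
      intro x hx
      exact ⟨hIccsub2 ⟨hx.1.le, hx.2⟩, fun h => hne x hx (by simpa using h)⟩
    refine top_le_iff.1 ?_
    calc (⊤ : ENNReal) = ∫⁻ x in Ioc d x0, ENNReal.ofReal (|deriv f x / f x|) := hcore.symm
      _ ≤ _ := lintegral_mono' (Measure.restrict_mono hsub le_rfl) le_rfl
  · -- x0 < c : zero to the right of x0; use reflection
    set Z := {x | x ∈ Icc x0 c ∧ f x = 0} with hZ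
    have hZeq : Z = Icc x0 c ∩ f ⁻¹' {0} := by ext y; simp [hZ, and_comm]
    have hIccsub : Icc x0 c ⊆ Ioo a b := fun y hy => ⟨hax0.trans_le' le_rfl |>.trans_le hy.1, lt_of_le_of_lt hy.2 hcb⟩
    have hZclosed : IsClosed Z := by
      rw [hZeq]
      exact (hcont.mono hIccsub).preimage_isClosed_of_isClosed isClosed_Icc isClosed_singleton
    have hZne : Z.Nonempty := ⟨c, ⟨hgt.le, le_rfl⟩, hfc⟩
    have hZbdd : BddBelow Z := ⟨x0, fun y hy => hy.1.1⟩
    set d := sInf Z with hd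
    have hdZ : d ∈ Z := hZclosed.csInf_mem hZne hZbdd
    have hx0d' : x0 ≤ d := hdZ.1.1
    have hdc : d ≤ c := hdZ.1.2
    have hfd : f d = 0 := hdZ.2
    have hx0d : x0 < d := lt_of_le_of_ne hx0d' (fun h => hx0 (h ▸ hfd))
    have hIccsub2 : Icc x0 d ⊆ Ioo a b := fun y hy => hIccsub ⟨hy.1, hy.2.trans hdc⟩
    have hne : ∀ x ∈ Ico x0 d, f x ≠ 0 := by
      intro x hx hfx
      have : x ∈ Z := ⟨⟨hx.1, hx.2.le.trans hdc⟩, hfx⟩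
      exact absurd (csInf_le hZbdd this) (not_le.2 hx.2)
    -- reflected function
    set F : ℝ → ℝ := fun y => f (-y) with hF
    have hH : ∀ y ∈ Icc (-d) (-x0), ∃ K : NNReal, ∃ t ∈ nhds y, LipschitzOnWith K F t := by
      intro y hy
      have hmem : -y ∈ Icc x0 d := ⟨by linarith [hy.1, hy.2], by linarith [hy.1, hy.2]⟩
      obtain ⟨K, t, ht, hl⟩ := hf (-y) (hIccsub2 hmem)
      refine ⟨K, (fun z : ℝ => -z) ⁻¹' t, continuous_neg.continuousAt.preimage_mem_nhds ht, ?_⟩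
      intro p hp q hq
      simpa [edist_neg_neg] using hl hp hq
    have hFd : F (-d) = 0 := by simp [hF, hfd]
    have hFne : ∀ y ∈ Ioc (-d) (-x0), F y ≠ 0 := by
      intro y hy
      exact hne (-y) ⟨by linarith [hy.1, hy.2], by linarith [hy.1, hy.2]⟩
    have hcore := core (neg_lt_neg hx0d) hH hFd hFne
    have hpt : ∀ y : ℝ, ENNReal.ofReal (|deriv F y / F y|) =
        ENNReal.ofReal (|deriv f (-y) / f (-y)|) := by
      intro y
      rw [hF]
      rw [deriv_comp_neg]
      rw [neg_div, abs_neg]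
    have key : ∫⁻ y in Ioc (-d) (-x0), ENNReal.ofReal (|deriv f (-y) / f (-y)|) = ⊤ := by
      rw [← hcore]
      exact lintegral_congr fun y => (hpt y).symm
    have hpre : (Neg.neg : ℝ → ℝ) ⁻¹' Ico x0 d = Ioc (-d) (-x0) := by
      ext y
      simp only [mem_preimage, mem_Ico, mem_Ioc]
      constructor <;> intro h <;> constructor <;> linarith [h.1, h.2]
    have hmap : ∫⁻ x in Ico x0 d, ENNReal.ofReal (|deriv f x / f x|) = ⊤ := by
      calc ∫⁻ x in Ico x0 d, ENNReal.ofReal (|deriv f x / f x|)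
          = ∫⁻ x, ENNReal.ofReal (|deriv f x / f x|)
              ∂((Measure.map Neg.neg volume).restrict (Ico x0 d)) := by
            rw [Measure.map_neg_eq_self]
        _ = ∫⁻ x, ENNReal.ofReal (|deriv f x / f x|)
              ∂((volume.restrict ((Neg.neg : ℝ → ℝ) ⁻¹' Ico x0 d)).map Neg.neg) := by
            rw [Measure.restrict_map measurable_neg measurableSet_Ico]
        _ = ∫⁻ y, ENNReal.ofReal (|deriv f (-y) / f (-y)|)
              ∂(volume.restrict ((Neg.neg : ℝ → ℝ) ⁻¹' Ico x0 d)) :=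
            measurableEmbedding_neg.lintegral_map _
        _ = ⊤ := by rw [hpre]; exact key
    have hsub : Ico x0 d ⊆ Ioo a b \ f ⁻¹' {0} := by
      intro x hx
      refine ⟨hIccsub2 ⟨hx.1, hx.2.le⟩, fun h => hne x hx (by simpa using h)⟩
    refine top_le_iff.1 ?_
    calc (⊤ : ENNReal) = ∫⁻ x in Ico x0 d, ENNReal.ofReal (|deriv f x / f x|) := hmap.symm
      _ ≤ _ := lintegral_mono' (Measure.restrict_mono hsub le_rfl) le_rfl
end
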